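/- arXiv:1301.2915 — 4 statements merged into one kernel-verified Lean document; each statement's English description precedes it below -/
import Mathlib

section
/- For every positive integer k, 2·∑_{j=1}^{k} ∑_{l=1}^{j} 1/(2l−1) = (2k+1)·(∑_{l=1}^{2k} 1/l − ∑_{l=1}^{k} 1/(2l)) − k. -/
lemma aux_odd (k : ℕ) :
    (∑ l ∈ Finset.Icc 1 (2 * k), 1 / (l : ℝ)) - ∑ l ∈ Finset.Icc 1 k, 1 / (2 * (l : ℝ))
      = ∑ l ∈ Finset.Icc 1 k, 1 / (2 * (l : ℝ) - 1) := by
  induction k with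
  | zero => simp
  | succ n ih =>
    have h2 : 2 * (n + 1) = (2 * n + 1) + 1 := by ring
    rw [h2, Finset.sum_Icc_succ_top (by omega), Finset.sum_Icc_succ_top (by omega),
      Finset.sum_Icc_succ_top (by omega), Finset.sum_Icc_succ_top (by omega)]
    push_cast
    have e : 1 / ((2 * (n : ℝ) + 1) + 1) = 1 / (2 * ((n : ℝ) + 1)) := by ring_nf
    have e2 : 1 / (2 * (n : ℝ) + 1) = 1 / (2 * ((n : ℝ) + 1) - 1) := by ring_nf
    linarith [ih, e, e2]

lemma main_aux (k : ℕ) :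
    2 * ∑ j ∈ Finset.Icc 1 k, ∑ l ∈ Finset.Icc 1 j, 1 / (2 * (l : ℝ) - 1)
      = (2 * (k : ℝ) + 1) * (∑ l ∈ Finset.Icc 1 k, 1 / (2 * (l : ℝ) - 1)) - k := by
  induction k with
  | zero => simp
  | succ n ih =>
    rw [Finset.sum_Icc_succ_top (by omega), Finset.sum_Icc_succ_top (by omega)]
    push_cast
    have hne : 2 * ((n : ℝ) + 1) - 1 ≠ 0 := by
      have h := Nat.cast_nonneg (α := ℝ) n
      intro h0; nlinarith
    field_simp
    linear_combination (2 * (n : ℝ) + 1) * ih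

theorem double_sum_odd_reciprocals (k : ℕ) (hk : 0 < k) :
    2 * ∑ j ∈ Finset.Icc 1 k, ∑ l ∈ Finset.Icc 1 j, 1 / (2 * (l : ℝ) - 1)
      = (2 * (k : ℝ) + 1) *
          ((∑ l ∈ Finset.Icc 1 (2 * k), 1 / (l : ℝ)) - ∑ l ∈ Finset.Icc 1 k, 1 / (2 * (l : ℝ)))
        - k := by
  rw [aux_odd, main_aux]
end

section
/- For every integer j ≥ 2 and positive integer k, ∑_{i=1}^{k} ψ^{(j-1)}(1/2 + i) = (−1)^j·(j−1)!·2^{j−1}·∑_{m=0}^{k} 1/(2m+1)^{j−1} − (1/2)·ψ^{(j-1)}(1/2) + (−1)^j·(j−1)!·2^{j−1}·(2k+1)·∑_{m=k+1}^{∞} 1/(2m+1)^{j}. -/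
/-- The digamma function `ψ(x) = Γ'(x)/Γ(x)`. -/
noncomputable def digamma (x : ℝ) : ℝ := deriv (fun y => Real.log (Real.Gamma y)) x

/-- The `j`-th polygamma function, the `j`-th derivative of the digamma function. -/
noncomputable def polygamma (j : ℕ) (x : ℝ) : ℝ := iteratedDeriv j digamma x


open Filter Topology Set

lemma summable_aux {x : ℝ} (hx : 0 < x) {j : ℕ} (hj : 2 ≤ j) :
    Summable (fun n : ℕ => 1 / (x + n) ^ j) := by
  have h := (Real.summable_one_div_nat_add_rpow x j).mpr (by exact_mod_cast by omega)
  apply h.congr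
  intro n
  rw [abs_of_pos (by positivity), Real.rpow_natCast, add_comm]

lemma hasDerivAt_term (j : ℕ) (hj : 1 ≤ j) (n : ℕ) {y : ℝ} (hy : 0 < y) :
    HasDerivAt (fun z : ℝ => 1 / (z + n) ^ j) (-(j : ℝ) / (y + n) ^ (j + 1)) y := by
  have hyn : (0:ℝ) < y + n := by positivity
  have h1 : HasDerivAt (fun z : ℝ => (z + n) ^ j) ((j : ℝ) * (y + n) ^ (j - 1)) y := by
    simpa using ((hasDerivAt_id y).add_const (n:ℝ)).fun_pow j
  have h2 := h1.fun_inv (by positivity)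
  have : -((j : ℝ) * (y + n) ^ (j - 1)) / ((y + n) ^ j) ^ 2 = -(j : ℝ) / (y + n) ^ (j + 1) := by
    rw [← pow_mul]
    rw [div_eq_div_iff (by positivity) (by positivity)]
    rw [show j * 2 = (j - 1) + (j + 1) by omega, pow_add]
    ring
  rw [this] at h2
  simpa [one_div] using h2

lemma hasDerivAt_h (j : ℕ) (hj : 2 ≤ j) {x : ℝ} (hx : 0 < x) :
    HasDerivAt (fun y : ℝ => ∑' n : ℕ, 1 / (y + n) ^ j)
      (∑' n : ℕ, -(j : ℝ) / (x + n) ^ (j + 1)) x := by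
  set s : Set ℝ := Ioo (x / 2) (x + 1) with hs
  have hxs : x ∈ s := by constructor <;> [linarith; linarith]
  have hso : IsOpen s := isOpen_Ioo
  have hpos : ∀ y ∈ s, 0 < y := fun y hy => lt_trans (by linarith) hy.1
  refine hasDerivAt_of_tendstoUniformlyOn (l := atTop) hso
    (g' := fun y : ℝ => ∑' n : ℕ, -(j : ℝ) / (y + n) ^ (j + 1))
    (f := fun (N : ℕ) (y : ℝ) => ∑ n ∈ Finset.range N, 1 / (y + n) ^ j)
    (f' := fun (N : ℕ) (y : ℝ) => ∑ n ∈ Finset.range N, -(j : ℝ) / (y + n) ^ (j + 1)) ?_ ?_ ?_ hxs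
  · have hu : Summable (fun n : ℕ => (j : ℝ) / (x / 2 + n) ^ (j + 1)) := by
      simpa [div_eq_mul_inv, mul_comm] using
        (summable_aux (by linarith : (0:ℝ) < x / 2) (by omega : 2 ≤ j + 1)).mul_left (j : ℝ)
    have hb : ∀ (n : ℕ), ∀ y ∈ s, ‖-(j : ℝ) / (y + n) ^ (j + 1)‖ ≤ (j : ℝ) / (x / 2 + n) ^ (j + 1) := by
      intro n y hy
      have h1 : (0:ℝ) < x / 2 + n := by positivity
      have h2 : x / 2 + n ≤ y + n := by linarith [hy.1]
      have h3 : (0:ℝ) < y + n := by linarith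
      rw [norm_div, norm_neg, Real.norm_natCast, Real.norm_eq_abs, abs_of_pos (pow_pos h3 _)]
      gcongr
    exact tendstoUniformlyOn_tsum_nat hu fun n y hy => hb n y hy
  · filter_upwards with N y hy
    exact HasDerivAt.fun_sum fun n _ => hasDerivAt_term j (by omega) n (hpos y hy)
  · intro y hy
    exact (summable_aux (hpos y hy) hj).hasSum.tendsto_sum_nat

noncomputable def Gm : ℝ := Real.eulerMascheroniConstant

lemma tendsto_c :
    Filter.Tendsto (fun n : ℕ => Real.log n - ∑ m ∈ Finset.range (n + 1), 1 / (1 + (m : ℝ)))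
      atTop (𝓝 (-Gm)) := by
  have h : Filter.Tendsto (fun n : ℕ => -(Real.eulerMascheroniSeq' n) - 1 / ((n : ℝ) + 1))
      atTop (𝓝 (-Gm - 0)) := by
    refine Filter.Tendsto.sub Real.tendsto_eulerMascheroniSeq'.neg ?_
    exact tendsto_one_div_add_atTop_nhds_zero_nat
  rw [sub_zero] at h
  apply h.congr'
  filter_upwards [Filter.eventually_ge_atTop 1] with n hn
  have hsum : ∑ m ∈ Finset.range (n + 1), 1 / (1 + (m : ℝ)) = (harmonic (n + 1) : ℝ) := by
    rw [harmonic, Rat.cast_sum]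
    refine Finset.sum_congr rfl fun i _ => ?_
    push_cast
    rw [one_div, add_comm]
  rw [hsum, Real.eulerMascheroniSeq', if_neg (by omega), harmonic_succ]
  push_cast
  ring

lemma summable_g {x : ℝ} (hx : 0 < x) :
    Summable (fun m : ℕ => 1 / (1 + (m : ℝ)) - 1 / (x + m)) := by
  refine Summable.of_norm (Summable.of_nonneg_of_le (fun m => norm_nonneg _) (fun m => ?_)
    (((summable_aux one_pos le_rfl).mul_left ((x + 1) / min x 1))))
  -- bound: ‖1/(1+m) - 1/(x+m)‖ ≤ (x+1)/min x 1 * (1/(1+m)^2)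
  have h1 : (0:ℝ) < 1 + m := by positivity
  have h2 : (0:ℝ) < x + m := by positivity
  have heq : 1 / (1 + (m : ℝ)) - 1 / (x + m) = (x - 1) / ((1 + m) * (x + m)) := by
    field_simp
    ring
  have hmin1 : min x 1 ≤ x := min_le_left x 1
  have hmin2 : min x 1 ≤ 1 := min_le_right x 1
  have hminpos : 0 < min x 1 := lt_min hx one_pos
  rw [heq, Real.norm_eq_abs, abs_div, abs_of_pos (mul_pos h1 h2)]
  have hA : min x 1 * (1 + (m:ℝ)) ≤ x + m := by
    have h5 : min x 1 * (m:ℝ) ≤ 1 * m := mul_le_mul_of_nonneg_right hmin2 (Nat.cast_nonneg m)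
    nlinarith
  have hden : min x 1 * (1 + (m:ℝ)) ^ 2 ≤ (1 + m) * (x + m) := by
    nlinarith [mul_le_mul_of_nonneg_left hA h1.le]
  have habs : |x - 1| ≤ x + 1 := abs_le.2 ⟨by linarith, by linarith⟩
  calc |x - 1| / ((1 + (m:ℝ)) * (x + m)) ≤ (x + 1) / (min x 1 * (1 + (m:ℝ)) ^ 2) :=
        div_le_div₀ (by positivity) habs (by positivity) hden
    _ = (x + 1) / min x 1 * (1 / (1 + (m:ℝ)) ^ 2) := by
        rw [div_mul_eq_div_div]
        ring

lemma g_bound {a b : ℝ} (ha : 0 < a) (m : ℕ) {y : ℝ} (hy : y ∈ Set.Ioo a b) :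
    ‖1 / (1 + (m : ℝ)) - 1 / (y + m)‖ ≤ (b + 1) / min a 1 * (1 / (1 + (m : ℝ)) ^ 2) := by
  obtain ⟨hy1, hy2⟩ := hy
  have hyp : 0 < y := ha.trans hy1
  have hb : 0 < b := hyp.trans hy2
  have h1 : (0:ℝ) < 1 + m := by positivity
  have h2 : (0:ℝ) < y + m := by positivity
  have heq : 1 / (1 + (m : ℝ)) - 1 / (y + m) = (y - 1) / ((1 + m) * (y + m)) := by
    field_simp
    ring
  have hmin1 : min a 1 ≤ a := min_le_left a 1
  have hmin2 : min a 1 ≤ 1 := min_le_right a 1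
  have hminpos : 0 < min a 1 := lt_min ha one_pos
  rw [heq, Real.norm_eq_abs, abs_div, abs_of_pos (mul_pos h1 h2)]
  have hA : min a 1 * (1 + (m:ℝ)) ≤ y + m := by
    have h5 : min a 1 * (m:ℝ) ≤ 1 * m := mul_le_mul_of_nonneg_right hmin2 (Nat.cast_nonneg m)
    nlinarith
  have hden : min a 1 * (1 + (m:ℝ)) ^ 2 ≤ (1 + m) * (y + m) := by
    nlinarith [mul_le_mul_of_nonneg_left hA h1.le]
  have habs : |y - 1| ≤ b + 1 := abs_le.2 ⟨by linarith, by linarith⟩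
  calc |y - 1| / ((1 + (m:ℝ)) * (y + m)) ≤ (b + 1) / (min a 1 * (1 + (m:ℝ)) ^ 2) :=
        div_le_div₀ (by positivity) habs (by positivity) hden
    _ = (b + 1) / min a 1 * (1 / (1 + (m:ℝ)) ^ 2) := by
        rw [div_mul_eq_div_div]
        ring

lemma key1 {x : ℝ} (hx : 0 < x) :
    HasDerivAt (fun y => Real.log (Real.Gamma y))
      (-Gm + ∑' m : ℕ, (1 / (1 + (m : ℝ)) - 1 / (x + m))) x := by
  set s : Set ℝ := Set.Ioo (x / 2) (x + 1) with hs
  have hxs : x ∈ s := by constructor <;> [linarith; linarith]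
  have hpos : ∀ y ∈ s, 0 < y := fun y hy => lt_trans (by linarith) hy.1
  -- uniform convergence of the tsum part (shifted partial sums)
  have hT0 : TendstoUniformlyOn
      (fun N (y : ℝ) => ∑ m ∈ Finset.range N, (1 / (1 + (m : ℝ)) - 1 / (y + m)))
      (fun y => ∑' m : ℕ, (1 / (1 + (m : ℝ)) - 1 / (y + m))) Filter.atTop s := by
    refine tendstoUniformlyOn_tsum_nat
      (((summable_aux one_pos le_rfl).mul_left ((x + 1 + 1) / min (x / 2) 1))) ?_
    exact fun m y hy => g_bound (by linarith) m hy
  have hT : TendstoUniformlyOn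
      (fun n (y : ℝ) => ∑ m ∈ Finset.range (n + 1), (1 / (1 + (m : ℝ)) - 1 / (y + m)))
      (fun y => ∑' m : ℕ, (1 / (1 + (m : ℝ)) - 1 / (y + m))) Filter.atTop s :=
    fun u hu => (Filter.tendsto_add_atTop_nat 1).eventually (hT0 u hu)
  have hC : TendstoUniformlyOn
      (fun (n : ℕ) (_ : ℝ) => Real.log n - ∑ m ∈ Finset.range (n + 1), 1 / (1 + (m : ℝ)))
      (fun _ => -Gm) Filter.atTop s := by
    rw [Metric.tendstoUniformlyOn_iff]
    intro ε hε
    filter_upwards [Metric.tendsto_nhds.mp tendsto_c ε hε] with n hn y _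
    rwa [dist_comm] at hn
  have htu : TendstoUniformlyOn
      (fun (n : ℕ) (y : ℝ) => Real.log n - ∑ m ∈ Finset.range (n + 1), 1 / (y + m))
      (fun y => -Gm + ∑' m : ℕ, (1 / (1 + (m : ℝ)) - 1 / (y + m))) Filter.atTop s := by
    refine (hC.add hT).congr ?_
    filter_upwards with n y _
    simp only [Pi.add_apply]
    rw [Finset.sum_sub_distrib]
    ring
  refine hasDerivAt_of_tendstoUniformlyOn (l := Filter.atTop)
    (f := fun (n : ℕ) (y : ℝ) => Real.BohrMollerup.logGammaSeq y n) isOpen_Ioo htu ?_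
    (fun y hy => Real.BohrMollerup.tendsto_log_gamma (hpos y hy)) hxs
  filter_upwards with n y hy
  have hyp := hpos y hy
  have h1 : HasDerivAt (fun z : ℝ => z * Real.log n + Real.log (Nat.factorial n)) (Real.log n) y := by
    simpa using ((hasDerivAt_id y).mul_const (Real.log n)).add_const (Real.log (Nat.factorial n))
  have h2 : HasDerivAt (fun z : ℝ => ∑ m ∈ Finset.range (n + 1), Real.log (z + m))
      (∑ m ∈ Finset.range (n + 1), 1 / (y + m)) y := by
    refine HasDerivAt.fun_sum fun m _ => ?_
    have hm : (0:ℝ) < y + m := by positivity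
    simpa [one_div] using ((hasDerivAt_id y).add_const (m : ℝ)).log hm.ne'
  simpa [Real.BohrMollerup.logGammaSeq] using h1.fun_sub h2

lemma digamma_series {x : ℝ} (hx : 0 < x) :
    digamma x = -Gm + ∑' m : ℕ, (1 / (1 + (m : ℝ)) - 1 / (x + m)) :=
  (key1 hx).deriv

lemma pointwise_digamma {y : ℝ} (hy : 0 < y) :
    Filter.Tendsto (fun n : ℕ => Real.log n - ∑ m ∈ Finset.range (n + 1), 1 / (y + (m:ℝ)))
      Filter.atTop (𝓝 (digamma y)) := by
  rw [digamma_series hy]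
  have h2 : Filter.Tendsto
      (fun n : ℕ => ∑ m ∈ Finset.range (n + 1), (1 / (1 + (m : ℝ)) - 1 / (y + m)))
      Filter.atTop (𝓝 (∑' m : ℕ, (1 / (1 + (m : ℝ)) - 1 / (y + m)))) :=
    ((summable_g hy).hasSum.tendsto_sum_nat).comp (Filter.tendsto_add_atTop_nat 1)
  have := tendsto_c.add h2
  apply this.congr
  intro n
  rw [Finset.sum_sub_distrib]
  ring

lemma hasDerivAt_digamma {x : ℝ} (hx : 0 < x) :
    HasDerivAt digamma (∑' n : ℕ, 1 / (x + (n:ℝ)) ^ 2) x := by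
  set s : Set ℝ := Set.Ioo (x / 2) (x + 1) with hs
  have hxs : x ∈ s := by constructor <;> [linarith; linarith]
  have hpos : ∀ y ∈ s, 0 < y := fun y hy => lt_trans (by linarith) hy.1
  have hT0 : TendstoUniformlyOn
      (fun N (y : ℝ) => ∑ m ∈ Finset.range N, 1 / (y + (m:ℝ)) ^ 2)
      (fun y => ∑' m : ℕ, 1 / (y + (m:ℝ)) ^ 2) Filter.atTop s := by
    refine tendstoUniformlyOn_tsum_nat (summable_aux (by linarith : (0:ℝ) < x / 2) le_rfl) ?_
    intro m y hy
    have h1 : (0:ℝ) < x / 2 + m := by positivity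
    have h2 : x / 2 + m ≤ y + m := by linarith [hy.1]
    rw [Real.norm_eq_abs, abs_of_pos (one_div_pos.mpr (pow_pos (h1.trans_le h2) 2))]
    gcongr
  have hT : TendstoUniformlyOn
      (fun n (y : ℝ) => ∑ m ∈ Finset.range (n + 1), 1 / (y + (m:ℝ)) ^ 2)
      (fun y => ∑' m : ℕ, 1 / (y + (m:ℝ)) ^ 2) Filter.atTop s :=
    fun u hu => (Filter.tendsto_add_atTop_nat 1).eventually (hT0 u hu)
  refine hasDerivAt_of_tendstoUniformlyOn (l := Filter.atTop)
    (f := fun (n : ℕ) (y : ℝ) => Real.log n - ∑ m ∈ Finset.range (n + 1), 1 / (y + (m:ℝ)))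
    isOpen_Ioo hT ?_ (fun y hy => pointwise_digamma (hpos y hy)) hxs
  filter_upwards with n y hy
  have hyp := hpos y hy
  have h2 : HasDerivAt (fun z : ℝ => ∑ m ∈ Finset.range (n + 1), 1 / (z + (m:ℝ)))
      (∑ m ∈ Finset.range (n + 1), -(1:ℝ) / (y + m) ^ 2) y := by
    refine HasDerivAt.fun_sum fun m _ => ?_
    simpa using hasDerivAt_term 1 le_rfl m hyp
  have h3 := h2.const_sub (Real.log n)
  convert h3 using 1
  rw [← Finset.sum_neg_distrib]
  refine Finset.sum_congr rfl fun m _ => ?_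
  ring

lemma polygamma_series (m : ℕ) (hm : 1 ≤ m) {x : ℝ} (hx : 0 < x) :
    iteratedDeriv m digamma x
      = (-1) ^ (m + 1) * (Nat.factorial m : ℝ) * ∑' n : ℕ, 1 / (x + (n:ℝ)) ^ (m + 1) := by
  induction m, hm using Nat.le_induction generalizing x with
  | base =>
    rw [iteratedDeriv_one, (hasDerivAt_digamma hx).deriv]
    norm_num
  | succ m hm ih =>
    rw [iteratedDeriv_succ]
    have hev : iteratedDeriv m digamma =ᶠ[𝓝 x]
        fun y => (-1) ^ (m + 1) * (Nat.factorial m : ℝ) * ∑' n : ℕ, 1 / (y + (n:ℝ)) ^ (m + 1) := by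
      filter_upwards [eventually_gt_nhds hx] with y hy
      exact ih hy
    rw [hev.deriv_eq]
    have hD := (HasDerivAt.const_mul ((-1) ^ (m + 1) * (Nat.factorial m : ℝ))
      (hasDerivAt_h (m + 1) (by omega) hx))
    rw [hD.deriv]
    have ht : ∑' n : ℕ, -((m:ℝ) + 1) / (x + n) ^ (m + 1 + 1)
        = -((m:ℝ) + 1) * ∑' n : ℕ, 1 / (x + (n:ℝ)) ^ (m + 1 + 1) := by
      rw [← tsum_mul_left]
      exact tsum_congr fun n => by rw [mul_one_div]
    have hc : ((m + 1 : ℕ) : ℝ) = (m : ℝ) + 1 := by push_cast; ring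
    rw [hc, ht]
    rw [Nat.factorial_succ]
    push_cast
    ring

lemma tsum_shift (j : ℕ) (i : ℕ) :
    ∑' n : ℕ, 1 / ((1/2 + (i:ℝ)) + n) ^ j
      = 2 ^ j * ∑' n : ℕ, 1 / (2 * ((n + i : ℕ):ℝ) + 1) ^ j := by
  rw [← tsum_mul_left]
  refine tsum_congr fun n => ?_
  have h : (2 * ((n + i : ℕ):ℝ) + 1) = ((1/2 + (i:ℝ)) + n) * 2 := by push_cast; ring
  have hA : ((1/2:ℝ) + (i:ℝ) + n) ≠ 0 := by positivity
  rw [h, mul_pow, mul_one_div, mul_comm _ ((2:ℝ) ^ j), ← div_div,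
    div_self (by positivity : ((2:ℝ) ^ j) ≠ 0)]

lemma key_alg (f : ℕ → ℝ) (F : ℝ) (k : ℕ) :
    ∑ i ∈ Finset.Icc 1 k, 2 * (F - ∑ m ∈ Finset.range i, f m)
      = (∑ m ∈ Finset.range (k+1), (2 * (m:ℝ) + 1) * f m) - F
        + (2 * (k:ℝ) + 1) * (F - ∑ m ∈ Finset.range (k+1), f m) := by
  induction k with
  | zero =>
    rw [Finset.Icc_eq_empty (by norm_num)]
    simp [Finset.sum_range_one]
  | succ k ih =>
    rw [Finset.sum_Icc_succ_top (by omega : 1 ≤ k + 1), ih,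
      Finset.sum_range_succ (f := f) (n := k + 1),
      Finset.sum_range_succ (f := fun m => (2 * (m:ℝ) + 1) * f m) (n := k + 1)]
    push_cast
    ring

theorem sum_polygamma_half_add (j : ℕ) (hj : 2 ≤ j) (k : ℕ) (hk : 0 < k) :
    ∑ i ∈ Finset.Icc 1 k, polygamma (j - 1) (1/2 + i)
      = (-1) ^ j * (Nat.factorial (j - 1) : ℝ) * 2 ^ (j - 1) *
          (∑ m ∈ Finset.range (k + 1), 1 / (2 * (m : ℝ) + 1) ^ (j - 1))
        - (1/2) * polygamma (j - 1) (1/2)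
        + (-1) ^ j * (Nat.factorial (j - 1) : ℝ) * 2 ^ (j - 1) * (2 * (k : ℝ) + 1) *
          ∑' m : ℕ, 1 / (2 * ((m : ℝ) + k + 1) + 1) ^ j := by
  have hj1 : 1 ≤ j - 1 := by omega
  have hjj : j - 1 + 1 = j := by omega
  set f : ℕ → ℝ := fun n => 1 / (2 * (n:ℝ) + 1) ^ j with hf
  have hsumf : Summable f := by
    have h := summable_aux (show (0:ℝ) < 1/2 by norm_num) hj
    have h2 := h.mul_left (((2:ℝ) ^ j)⁻¹)
    apply h2.congr
    intro n
    show ((2:ℝ) ^ j)⁻¹ * (1 / (1/2 + (n:ℝ)) ^ j) = 1 / (2 * (n:ℝ) + 1) ^ j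
    have h3 : 2 * (n:ℝ) + 1 = (1/2 + (n:ℝ)) * 2 := by ring
    rw [h3, mul_pow, ← one_div ((2:ℝ) ^ j), div_mul_div_comm, one_mul,
      mul_comm ((2:ℝ) ^ j) _]
  set F : ℝ := ∑' n, f n with hF
  -- polygamma values at 1/2 + i
  have hpoly : ∀ i : ℕ, polygamma (j - 1) (1/2 + (i:ℝ))
      = (-1) ^ j * (Nat.factorial (j - 1) : ℝ) * (2 ^ j * (F - ∑ m ∈ Finset.range i, f m)) := by
    intro i
    have hx : (0:ℝ) < 1/2 + i := by positivity
    rw [polygamma, polygamma_series (j - 1) hj1 hx, hjj]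
    have hshift := tsum_shift j i
    have htail : ∑' n : ℕ, 1 / (2 * ((n + i : ℕ):ℝ) + 1) ^ j
        = F - ∑ m ∈ Finset.range i, f m := by
      have h := Summable.sum_add_tsum_nat_add i hsumf
      have h2 : ∑' n : ℕ, 1 / (2 * ((n + i : ℕ):ℝ) + 1) ^ j = ∑' n : ℕ, f (n + i) :=
        tsum_congr fun n => rfl
      rw [h2]
      linarith [h]
    rw [hshift, htail]
  have hpoly0 : polygamma (j - 1) (1/2) = (-1) ^ j * (Nat.factorial (j - 1) : ℝ) * (2 ^ j * F) := by
    simpa using hpoly 0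
  -- tail tsum in the statement
  have htail2 : ∑' m : ℕ, 1 / (2 * ((m : ℝ) + k + 1) + 1) ^ j
      = F - ∑ m ∈ Finset.range (k + 1), f m := by
    have h := Summable.sum_add_tsum_nat_add (k + 1) hsumf
    have h2 : ∑' m : ℕ, 1 / (2 * ((m : ℝ) + k + 1) + 1) ^ j = ∑' m : ℕ, f (m + (k + 1)) := by
      refine tsum_congr fun m => ?_
      rw [hf]
      push_cast
      ring_nf
    rw [h2]
    linarith [h]
  -- first finite sum
  have hfirst : ∀ m : ℕ, 1 / (2 * (m:ℝ) + 1) ^ (j - 1) = (2 * (m:ℝ) + 1) * f m := by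
    intro m
    have h2m : (0:ℝ) < 2 * m + 1 := by positivity
    rw [hf, eq_comm, mul_one_div, div_eq_div_iff (by positivity) (by positivity), one_mul,
      ← pow_succ', hjj]
  have h2j : (2:ℝ) ^ j = 2 ^ (j - 1) * 2 := by rw [← pow_succ, hjj]
  have hL : ∑ i ∈ Finset.Icc 1 k, polygamma (j - 1) (1/2 + i)
      = ((-1) ^ j * (Nat.factorial (j - 1) : ℝ) * 2 ^ (j - 1)) *
          ∑ i ∈ Finset.Icc 1 k, 2 * (F - ∑ m ∈ Finset.range i, f m) := by
    rw [Finset.mul_sum]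
    refine Finset.sum_congr rfl fun i _ => ?_
    rw [hpoly i, h2j]
    ring
  rw [hL, key_alg f F k, hpoly0, htail2]
  rw [Finset.sum_congr rfl fun m _ => hfirst m]
  rw [h2j]
  ring
end

section
/- Let Γ_j(n,2) denote the j-th cumulant of log|det X_n| for an n×n GUE matrix X_n, given for n = 2k+1 by Γ_j(n,2) = (d^j/ds^j) log M_{n,2}(s)|_{s=0} with M_{n,2}(s) = 2^{ns/2}·∏_{m=1}^{n} Γ(s/2 + 1/2 + ⌊m/2⌋)/Γ(1/2 + ⌊m/2⌋). Then there is a constant C, independent of n and j, such that |Γ_j(n,2)| ≤ C·j! for all integers j ≥ 3 and all n ≥ 1. -/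
/-- The moment generating function of the log-determinant of an `n × n` GUE matrix:
`M_{n,2}(s) = 2^{ns/2} · ∏_{m=1}^{n} Γ(s/2 + 1/2 + ⌊m/2⌋)/Γ(1/2 + ⌊m/2⌋)`. -/
noncomputable def gueMgf (n : ℕ) (s : ℝ) : ℝ :=
  (2 : ℝ) ^ ((n : ℝ) * s / 2) *
    ∏ m ∈ Finset.Icc 1 n,
      Real.Gamma (s / 2 + 1/2 + (m / 2 : ℕ)) / Real.Gamma (1/2 + (m / 2 : ℕ))

/-- The `j`-th cumulant of the log-determinant of an `n × n` GUE matrix. -/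
noncomputable def gueCumulant (j n : ℕ) : ℝ :=
  iteratedDeriv j (fun s => Real.log (gueMgf n s)) 0

open Real Filter Finset Topology

namespace GueAux

noncomputable def pg (k : ℕ) (x : ℝ) : ℝ := ∑' i : ℕ, 1 / (x + i) ^ k

noncomputable def dg (y : ℝ) : ℝ :=
  -Real.eulerMascheroniConstant + -(1 / y) +
    ∑' i : ℕ, (1 / ((i : ℝ) + 1) - 1 / (y + i + 1))

lemma summable_base : Summable (fun i : ℕ => 1 / ((i : ℝ) + 1) ^ 2) := by
  have := (summable_nat_add_iff (f := fun n : ℕ => 1 / (n : ℝ) ^ 2) 1).2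
    ((Real.summable_one_div_nat_pow (p := 2)).2 one_lt_two)
  simpa [Nat.cast_add] using this

lemma summable_pg {x : ℝ} (hx : 0 < x) {k : ℕ} (hk : 2 ≤ k) :
    Summable fun i : ℕ => 1 / (x + (i : ℝ)) ^ k := by
  set c := min x 1 with hc
  have hc0 : 0 < c := lt_min hx one_pos
  have hc1 : c ≤ 1 := min_le_right _ _
  apply Summable.of_nonneg_of_le (fun i => by positivity) (fun i => ?_)
    (summable_base.mul_left (1 / c ^ k))
  have h1 : c * ((i : ℝ) + 1) ≤ x + i := by
    have : c ≤ x := min_le_left _ _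
    have hi : c * i ≤ i := by
      have : (0:ℝ) ≤ i := by positivity
      nlinarith
    nlinarith
  have h2 : c ^ k * ((i : ℝ) + 1) ^ 2 ≤ (x + i) ^ k := by
    calc c ^ k * ((i : ℝ) + 1) ^ 2 ≤ c ^ k * ((i : ℝ) + 1) ^ k := by
          have h0 : (0:ℝ) ≤ (i:ℝ) := Nat.cast_nonneg i
          have := pow_le_pow_right₀ (a := (i:ℝ)+1) (by linarith) hk
          have hck : (0:ℝ) ≤ c ^ k := by positivity
          nlinarith
      _ = (c * ((i : ℝ) + 1)) ^ k := (mul_pow _ _ _).symm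
      _ ≤ (x + i) ^ k := by
          exact pow_le_pow_left₀ (by positivity) h1 k
  rw [div_mul_div_comm, one_mul]
  exact one_div_le_one_div_of_le (by positivity) h2

lemma pg_nonneg (k : ℕ) {x : ℝ} (hx : 0 < x) : 0 ≤ pg k x :=
  tsum_nonneg fun i => by positivity

lemma sum_range_sq_le {x : ℝ} (hx : 0 < x) (N : ℕ) :
    ∑ i ∈ Finset.range (N + 1), 1 / (x + (i : ℝ)) ^ 2 + 1 / (x + N) ≤ 1 / x ^ 2 + 1 / x := by
  induction N with
  | zero => simp
  | succ N ih =>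
      rw [Finset.sum_range_succ]
      have h1 : 1 / (x + (N + 1 : ℕ)) ^ 2 + 1 / (x + (N + 1 : ℕ)) ≤ 1 / (x + N) := by
        push_cast
        have hxN : 0 < x + (N : ℝ) := by positivity
        have hxN1 : 0 < x + (N : ℝ) + 1 := by linarith
        rw [div_add_div _ _ (by positivity) (by positivity), div_le_div_iff₀ (by positivity) hxN]
        ring_nf
        nlinarith
      push_cast at h1 ⊢
      linarith

lemma pg2_le {x : ℝ} (hx : 0 < x) : pg 2 x ≤ 1 / x ^ 2 + 1 / x := by
  apply Summable.tsum_le_of_sum_range_le (summable_pg hx le_rfl)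
  intro N
  match N with
  | 0 => simp; positivity
  | (M + 1) =>
      have := sum_range_sq_le hx M
      have h2 : 0 < 1 / (x + (M : ℝ)) := by positivity
      linarith

lemma pg3_le {x : ℝ} (hx : 1 ≤ x) : pg 3 x ≤ 2 / x ^ 2 := by
  have hx0 : 0 < x := lt_of_lt_of_le one_pos hx
  have h1 : pg 3 x ≤ (1 / x) * pg 2 x := by
    rw [pg, pg, ← tsum_mul_left]
    apply Summable.tsum_le_tsum _ (summable_pg hx0 (by norm_num)) ((summable_pg hx0 le_rfl).mul_left _)
    intro i
    have hxi : 0 < x + (i : ℝ) := by positivity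
    rw [div_mul_div_comm, one_mul]
    apply one_div_le_one_div_of_le (by positivity)
    calc x * (x + i) ^ 2 ≤ (x + i) * (x + i) ^ 2 := by nlinarith
      _ = (x + i) ^ 3 := by ring
  have h2 := pg2_le hx0
  calc pg 3 x ≤ (1 / x) * (1 / x ^ 2 + 1 / x) := by
        refine h1.trans ?_
        have h0 : (0:ℝ) ≤ 1 / x := by positivity
        exact mul_le_mul_of_nonneg_left h2 h0
    _ = 1 / x * (1 / x ^ 2) + 1 / x ^ 2 := by ring
    _ ≤ 1 / x ^ 2 + 1 / x ^ 2 := by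
        have : 1 / x * (1 / x ^ 2) ≤ 1 / x ^ 2 := by
          rw [div_mul_div_comm, one_mul]
          apply one_div_le_one_div_of_le (by positivity)
          nlinarith
        linarith
    _ = 2 / x ^ 2 := by ring

lemma sum_Icc_two_div_sq_le (n : ℕ) :
    ∑ m ∈ Finset.Icc 1 n, 2 / (m : ℝ) ^ 2 ≤ 4 := by
  have key : ∀ n : ℕ, ∑ m ∈ Finset.Icc 1 n, 2 / (m : ℝ) ^ 2 ≤ 4 - 4 / ((n : ℝ) + 1) := by
    intro n
    induction n with
    | zero => simp
    | succ n ih =>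
        rw [Finset.sum_Icc_succ_top (by omega : 1 ≤ n + 1)]
        have hn0 : (0:ℝ) < (n : ℝ) + 1 := by positivity
        have hn1 : (0:ℝ) < (n : ℝ) + 2 := by positivity
        have step : 2 / ((n : ℝ) + 1) ^ 2 ≤ 4 / ((n : ℝ) + 1) - 4 / ((n : ℝ) + 2) := by
          rw [div_sub_div _ _ (ne_of_gt hn0) (ne_of_gt hn1), div_le_div_iff₀ (by positivity) (by positivity)]
          nlinarith
        push_cast
        rw [show ((n:ℝ)+1+1) = (n:ℝ)+2 by ring]
        linarith
  have h := key n
  have : 0 ≤ 4 / ((n : ℝ) + 1) := by positivity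
  linarith

lemma hasDerivAt_term (k : ℕ) (hk : 1 ≤ k) (i : ℕ) {y : ℝ} (hy : 0 < y + (i : ℝ)) :
    HasDerivAt (fun y : ℝ => 1 / (y + (i : ℝ)) ^ k) (-((k : ℝ) / (y + (i : ℝ)) ^ (k + 1))) y := by
  have h1 : HasDerivAt (fun y : ℝ => y + (i : ℝ)) 1 y := (hasDerivAt_id y).add_const _
  have h2 : HasDerivAt (fun y : ℝ => (y + (i : ℝ)) ^ k) ((k : ℝ) * (y + (i : ℝ)) ^ (k - 1) * 1) y :=
    h1.pow k
  have h3 := h2.fun_inv (by positivity)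
  have key : -((k : ℝ) * (y + (i : ℝ)) ^ (k - 1) * 1) / ((y + (i : ℝ)) ^ k) ^ 2
      = -((k : ℝ) / (y + (i : ℝ)) ^ (k + 1)) := by
    have hp : ((y + (i : ℝ)) ^ k) ^ 2 = (y + (i : ℝ)) ^ (k - 1) * (y + (i : ℝ)) ^ (k + 1) := by
      rw [← pow_mul, ← pow_add]
      congr 1
      omega
    rw [mul_one, hp, neg_div, neg_inj]
    rw [div_eq_div_iff (by positivity) (by positivity)]
    ring
  rw [key] at h3
  simpa [one_div] using h3

lemma hasDerivAt_pg {k : ℕ} (hk : 2 ≤ k) {x : ℝ} (hx : 0 < x) :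
    HasDerivAt (pg k) (-(k : ℝ) * pg (k + 1) x) x := by
  have hx2 : 0 < x / 2 := half_pos hx
  have hmem : x ∈ Set.Ioi (x / 2) := Set.mem_Ioi.2 (half_lt_self hx)
  have hsum : Summable (fun i : ℕ => (k : ℝ) * (1 / (x / 2 + (i : ℝ)) ^ (k + 1))) :=
    (summable_pg hx2 (by omega)).mul_left _
  have hbnd : ∀ (i : ℕ) (y : ℝ), y ∈ Set.Ioi (x / 2) →
      ‖-((k : ℝ) / (y + (i : ℝ)) ^ (k + 1))‖ ≤ (k : ℝ) * (1 / (x / 2 + (i : ℝ)) ^ (k + 1)) := by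
    intro i y hy
    have hy' := Set.mem_Ioi.1 hy
    have hi : (0:ℝ) ≤ (i : ℝ) := Nat.cast_nonneg i
    have hyi : 0 < y + (i : ℝ) := by linarith
    rw [norm_neg, Real.norm_eq_abs, abs_of_nonneg (by positivity)]
    rw [div_eq_mul_one_div]
    gcongr
  have H := hasDerivAt_tsum_of_isPreconnected hsum (isOpen_Ioi (a := x / 2))
      isPreconnected_Ioi
      (g := fun (i : ℕ) (y : ℝ) => 1 / (y + (i : ℝ)) ^ k)
      (g' := fun (i : ℕ) (y : ℝ) => -((k : ℝ) / (y + (i : ℝ)) ^ (k + 1)))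
      (fun i y hy => hasDerivAt_term k (by omega) i
        (by have := Set.mem_Ioi.1 hy; have : (0:ℝ) ≤ (i:ℝ) := Nat.cast_nonneg i; linarith [Set.mem_Ioi.1 hy]))
      hbnd hmem (summable_pg hx hk) hmem
  have heq : (∑' i : ℕ, -((k : ℝ) / (x + (i : ℝ)) ^ (k + 1)))
      = -(k : ℝ) * pg (k + 1) x := by
    rw [pg, ← tsum_mul_left]
    apply tsum_congr
    intro i
    ring
  rw [heq] at H
  exact H

lemma hasDerivAt_dg {x : ℝ} (hx : 0 < x) : HasDerivAt dg (pg 2 x) x := by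
  have hx2 : 0 < x / 2 := half_pos hx
  have hmem : x ∈ Set.Ioi (x / 2) := Set.mem_Ioi.2 (half_lt_self hx)
  have hconst : HasDerivAt (fun _ : ℝ => -Real.eulerMascheroniConstant) 0 x :=
    hasDerivAt_const _ _
  have hmid : HasDerivAt (fun y : ℝ => -(1 / y)) ((x ^ 2)⁻¹) x := by
    simpa [one_div] using (hasDerivAt_inv hx.ne').fun_neg
  -- tsum part
  have hterm : ∀ (i : ℕ) (y : ℝ), y ∈ Set.Ioi (x / 2) →
      HasDerivAt (fun y : ℝ => 1 / ((i : ℝ) + 1) - 1 / (y + (i : ℝ) + 1))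
        (1 / (y + (i : ℝ) + 1) ^ 2) y := by
    intro i y hy
    have hy' := Set.mem_Ioi.1 hy
    have hi : (0:ℝ) ≤ (i : ℝ) := Nat.cast_nonneg i
    have hyi : 0 < y + (i : ℝ) + 1 := by linarith
    have hin : HasDerivAt (fun y : ℝ => y + (i : ℝ) + 1) 1 y :=
      ((hasDerivAt_id y).add_const _).add_const _
    have hinv := hin.inv hyi.ne'
    have := hinv.const_sub (1 / ((i : ℝ) + 1))
    simpa [one_div, neg_div, neg_neg] using this
  have hbound : ∀ (i : ℕ) (y : ℝ), y ∈ Set.Ioi (x / 2) →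
      ‖1 / (y + (i : ℝ) + 1) ^ 2‖ ≤ 1 / (x / 2 + (i : ℝ)) ^ 2 := by
    intro i y hy
    have hy' := Set.mem_Ioi.1 hy
    have hi : (0:ℝ) ≤ (i : ℝ) := Nat.cast_nonneg i
    rw [Real.norm_eq_abs, abs_of_nonneg (by positivity)]
    apply one_div_le_one_div_of_le (by positivity)
    exact pow_le_pow_left₀ (by positivity) (by linarith) _
  have hsum0 : Summable (fun i : ℕ => 1 / ((i : ℝ) + 1) - 1 / (x + (i : ℝ) + 1)) := by
    apply Summable.of_nonneg_of_le (fun i => ?_) (fun i => ?_) (summable_base.mul_left x)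
    · have hi : (0:ℝ) ≤ (i : ℝ) := Nat.cast_nonneg i
      have h1 : (0:ℝ) < (i : ℝ) + 1 := by linarith
      have h2 : (0:ℝ) < x + (i : ℝ) + 1 := by linarith
      have := one_div_le_one_div_of_le h1 (by linarith : (i : ℝ) + 1 ≤ x + (i : ℝ) + 1)
      linarith
    · have hi : (0:ℝ) ≤ (i : ℝ) := Nat.cast_nonneg i
      have h1 : (0:ℝ) < (i : ℝ) + 1 := by linarith
      have h2 : (0:ℝ) < x + (i : ℝ) + 1 := by linarith
      rw [div_sub_div _ _ h1.ne' h2.ne']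
      have hnum : 1 * (x + (i:ℝ) + 1) - ((i:ℝ)+1) * 1 = x := by ring
      rw [hnum, show x * (1 / ((i:ℝ)+1)^2) = x / ((i:ℝ)+1)^2 by ring]
      gcongr
      nlinarith
  have htsum : HasDerivAt (fun y : ℝ => ∑' i : ℕ, (1 / ((i : ℝ) + 1) - 1 / (y + (i : ℝ) + 1)))
      (∑' i : ℕ, 1 / (x + (i : ℝ) + 1) ^ 2) x :=
    hasDerivAt_tsum_of_isPreconnected (summable_pg hx2 le_rfl) (isOpen_Ioi (a := x / 2))
      isPreconnected_Ioi hterm hbound hmem hsum0 hmem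
  have Hfull := (hconst.add hmid).add htsum
  have hval : 0 + (x ^ 2)⁻¹ + ∑' i : ℕ, 1 / (x + (i : ℝ) + 1) ^ 2 = pg 2 x := by
    rw [pg, Summable.tsum_eq_zero_add (summable_pg hx le_rfl)]
    push_cast
    rw [zero_add]
    congr 1
    · norm_num
    · apply tsum_congr
      intro i
      ring_nf
  rw [hval] at Hfull
  have : dg = fun y : ℝ => -Real.eulerMascheroniConstant + -(1 / y) +
      ∑' i : ℕ, (1 / ((i : ℝ) + 1) - 1 / (y + (i : ℝ) + 1)) := rfl
  rw [this]
  exact Hfull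

lemma phi_nonneg (i : ℕ) {y : ℝ} (hy : 0 < y) :
    0 ≤ 1 / ((i : ℝ) + 1) - 1 / (y + (i : ℝ) + 1) := by
  have hi : (0:ℝ) ≤ (i : ℝ) := Nat.cast_nonneg i
  have h1 : (0:ℝ) < (i : ℝ) + 1 := by linarith
  have := one_div_le_one_div_of_le h1 (by linarith : (i : ℝ) + 1 ≤ y + (i : ℝ) + 1)
  linarith

lemma phi_le (i : ℕ) {y : ℝ} (hy : 0 < y) :
    1 / ((i : ℝ) + 1) - 1 / (y + (i : ℝ) + 1) ≤ y * (1 / ((i : ℝ) + 1) ^ 2) := by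
  have hi : (0:ℝ) ≤ (i : ℝ) := Nat.cast_nonneg i
  have h1 : (0:ℝ) < (i : ℝ) + 1 := by linarith
  have h2 : (0:ℝ) < y + (i : ℝ) + 1 := by linarith
  rw [div_sub_div _ _ h1.ne' h2.ne']
  have hnum : 1 * (y + (i:ℝ) + 1) - ((i:ℝ)+1) * 1 = y := by ring
  rw [hnum, show y * (1 / ((i:ℝ)+1)^2) = y / ((i:ℝ)+1)^2 by ring]
  gcongr
  nlinarith

lemma hasDerivAt_logGamma {x : ℝ} (hx : 0 < x) :
    HasDerivAt (fun y : ℝ => Real.log (Real.Gamma y)) (dg x) x := by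
  have key := hasDerivAt_of_tendstoLocallyUniformlyOn (l := (atTop : Filter ℕ)) (isOpen_Ioi (a := (0:ℝ)))
    (f := fun (N : ℕ) (y : ℝ) =>
      y * Real.log ((N : ℝ) + 1) + Real.log (((N + 1).factorial : ℕ) : ℝ)
        - ∑ j ∈ Finset.range (N + 2), Real.log (y + (j : ℝ)))
    (f' := fun (N : ℕ) (y : ℝ) =>
      (Real.log ((N : ℝ) + 1) - ((harmonic (N + 1) : ℚ) : ℝ)) + -(1 / y)
        + ∑ i ∈ Finset.range (N + 1), (1 / ((i : ℝ) + 1) - 1 / (y + (i : ℝ) + 1)))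
    (g := fun y : ℝ => Real.log (Real.Gamma y)) (g' := dg)
    ?hTLU ?hderiv ?hptwise (Set.mem_Ioi.2 hx)
  · exact key
  case hderiv =>
    apply Eventually.of_forall
    intro N y hy
    have hy0 : (0:ℝ) < y := Set.mem_Ioi.1 hy
    have h1 : HasDerivAt (fun y : ℝ => y * Real.log ((N : ℝ) + 1))
        (Real.log ((N : ℝ) + 1)) y := by
      simpa using (hasDerivAt_id y).mul_const (Real.log ((N : ℝ) + 1))
    have h2 := h1.add_const (Real.log (((N + 1).factorial : ℕ) : ℝ))
    have h3 : HasDerivAt (fun y : ℝ => ∑ j ∈ Finset.range (N + 2), Real.log (y + (j : ℝ)))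
        (∑ j ∈ Finset.range (N + 2), 1 / (y + (j : ℝ))) y := by
      apply HasDerivAt.fun_sum
      intro j _
      have hj : (0:ℝ) ≤ (j : ℝ) := Nat.cast_nonneg j
      have hyj : 0 < y + (j : ℝ) := by linarith
      have hin : HasDerivAt (fun y : ℝ => y + (j : ℝ)) 1 y := (hasDerivAt_id y).add_const _
      have := (Real.hasDerivAt_log hyj.ne').comp y hin
      simpa [one_div, Function.comp_def] using this
    have h4 := h2.fun_sub h3
    convert h4 using 1
    -- value equality
    have hsplit : ∑ j ∈ Finset.range (N + 2), 1 / (y + (j : ℝ))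
        = (∑ i ∈ Finset.range (N + 1), 1 / (y + (i : ℝ) + 1)) + 1 / y := by
      rw [Finset.sum_range_succ' (fun j : ℕ => 1 / (y + (j : ℝ))) (N + 1)]
      push_cast
      congr 1
      · exact Finset.sum_congr rfl fun i _ => by ring
      · norm_num
    have hH : ((harmonic (N + 1) : ℚ) : ℝ) = ∑ i ∈ Finset.range (N + 1), 1 / ((i : ℝ) + 1) := by
      rw [harmonic]
      push_cast
      simp [one_div]
    show Real.log ((N : ℝ) + 1) - ((harmonic (N + 1) : ℚ) : ℝ) + -(1 / y)
        + ∑ i ∈ Finset.range (N + 1), (1 / ((i : ℝ) + 1) - 1 / (y + (i : ℝ) + 1)) = _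
    rw [hsplit, hH, Finset.sum_sub_distrib]
    ring
  case hptwise =>
    intro y hy
    have hy0 : (0:ℝ) < y := Set.mem_Ioi.1 hy
    have hΓpos := Real.Gamma_pos_of_pos hy0
    have hΓ : Tendsto (fun N : ℕ => Real.GammaSeq y (N + 1)) atTop (𝓝 (Real.Gamma y)) :=
      (Real.GammaSeq_tendsto_Gamma y).comp (tendsto_add_atTop_nat 1)
    have hlog : Tendsto (fun N : ℕ => Real.log (Real.GammaSeq y (N + 1))) atTop
        (𝓝 (Real.log (Real.Gamma y))) :=
      ((Real.continuousAt_log hΓpos.ne').tendsto.comp hΓ)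
    apply hlog.congr
    intro N
    have hprodpos : 0 < ∏ j ∈ Finset.range (N + 2), (y + (j : ℝ)) := by
      apply Finset.prod_pos
      intro j _
      have : (0:ℝ) ≤ (j : ℝ) := Nat.cast_nonneg j
      linarith
    have hMpos : (0:ℝ) < ((N : ℝ) + 1) := by positivity
    have hrpow : (0:ℝ) < ((N + 1 : ℕ) : ℝ) ^ (y : ℝ) := by
      apply Real.rpow_pos_of_pos
      push_cast
      positivity
    have hfacpos : (0:ℝ) < (((N + 1).factorial : ℕ) : ℝ) := by
      exact_mod_cast Nat.factorial_pos (N + 1)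
    rw [Real.GammaSeq]
    push_cast
    rw [Real.log_div (by push_cast at hrpow ⊢; positivity) (by push_cast at hprodpos ⊢; positivity)]
    rw [Real.log_mul (by push_cast at hrpow ⊢; positivity) (by positivity)]
    rw [Real.log_rpow (by positivity)]
    rw [Real.log_prod (fun j hj => by
      have : (0:ℝ) ≤ (j : ℝ) := Nat.cast_nonneg j
      positivity)]
  case hTLU =>
    rw [tendstoLocallyUniformlyOn_iff_forall_isCompact isOpen_Ioi]
    intro K hK hKc
    obtain ⟨M, hM⟩ := hKc.bddAbove
    rw [mem_upperBounds] at hM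
    -- part 1 : constants
    have hA : Tendsto (fun N : ℕ => Real.log ((N : ℝ) + 1) - ((harmonic (N + 1) : ℚ) : ℝ))
        atTop (𝓝 (-Real.eulerMascheroniConstant)) := by
      have h := (Real.tendsto_eulerMascheroniSeq'.comp (tendsto_add_atTop_nat 1)).neg
      apply h.congr
      intro N
      rw [Function.comp_apply, Real.eulerMascheroniSeq', if_neg (Nat.succ_ne_zero N)]
      push_cast
      ring
    have TUO1 : TendstoUniformlyOn
        (fun (N : ℕ) (_ : ℝ) => Real.log ((N : ℝ) + 1) - ((harmonic (N + 1) : ℚ) : ℝ))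
        (fun _ : ℝ => -Real.eulerMascheroniConstant) atTop K := hA.tendstoUniformlyOn_const K
    have TUO2 : TendstoUniformlyOn (fun (_ : ℕ) (y : ℝ) => -(1 / y))
        (fun y : ℝ => -(1 / y)) atTop K := by
      intro u hu
      apply Eventually.of_forall
      intro N y _
      exact refl_mem_uniformity hu
    have TUO3 : TendstoUniformlyOn
        (fun (N : ℕ) (y : ℝ) => ∑ i ∈ Finset.range (N + 1), (1 / ((i : ℝ) + 1) - 1 / (y + (i : ℝ) + 1)))
        (fun y : ℝ => ∑' i : ℕ, (1 / ((i : ℝ) + 1) - 1 / (y + (i : ℝ) + 1))) atTop K := by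
      have hMK : ∀ y ∈ K, 0 < y := fun y hy => Set.mem_Ioi.1 (hK hy)
      have hb : ∀ (i : ℕ) (y : ℝ), y ∈ K →
          ‖1 / ((i : ℝ) + 1) - 1 / (y + (i : ℝ) + 1)‖ ≤ M * (1 / ((i : ℝ) + 1) ^ 2) := by
        intro i y hy
        have hy0 := Set.mem_Ioi.1 (hK hy)
        rw [Real.norm_eq_abs, abs_of_nonneg (phi_nonneg i hy0)]
        calc 1 / ((i : ℝ) + 1) - 1 / (y + (i : ℝ) + 1) ≤ y * (1 / ((i : ℝ) + 1) ^ 2) :=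
              phi_le i hy0
          _ ≤ M * (1 / ((i : ℝ) + 1) ^ 2) := by
              have := hM y hy
              have hpos : (0:ℝ) ≤ 1 / ((i : ℝ) + 1) ^ 2 := by positivity
              nlinarith
      have H := tendstoUniformlyOn_tsum_nat
        (f := fun (i : ℕ) (y : ℝ) => 1 / ((i : ℝ) + 1) - 1 / (y + (i : ℝ) + 1))
        (u := fun i : ℕ => M * (1 / ((i : ℝ) + 1) ^ 2)) (s := K)
        (summable_base.mul_left M) hb
      intro u hu
      exact (tendsto_add_atTop_nat 1).eventually (H u hu)
    exact (TUO1.add TUO2).add TUO3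

noncomputable def aa (m : ℕ) : ℝ := 1 / 2 + ((m / 2 : ℕ) : ℝ)

lemma aa_half (m : ℕ) : 1 / 2 ≤ aa m := by
  have : (0:ℝ) ≤ ((m / 2 : ℕ) : ℝ) := Nat.cast_nonneg _
  unfold aa; linarith

lemma aa_pos (m : ℕ) : 0 < aa m := lt_of_lt_of_le (by norm_num) (aa_half m)

lemma two_aa (m : ℕ) : (m : ℝ) ≤ 2 * aa m := by
  have h : m ≤ 2 * (m / 2) + 1 := by omega
  have h' : (m : ℝ) ≤ 2 * ((m / 2 : ℕ) : ℝ) + 1 := by exact_mod_cast h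
  unfold aa; linarith

lemma arg_pos {s : ℝ} (hs : -1 < s) (m : ℕ) : 0 < s / 2 + aa m := by
  have := aa_half m
  linarith

noncomputable def F (n : ℕ) (s : ℝ) : ℝ :=
  s * ((n : ℝ) * Real.log 2 / 2) +
    ∑ m ∈ Finset.Icc 1 n,
      (Real.log (Real.Gamma (s / 2 + aa m)) - Real.log (Real.Gamma (aa m)))

noncomputable def G (k n : ℕ) (s : ℝ) : ℝ := ∑ m ∈ Finset.Icc 1 n, pg k (s / 2 + aa m)

lemma log_gueMgf_eq {n : ℕ} {s : ℝ} (hs : -1 < s) : Real.log (gueMgf n s) = F n s := by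
  have hfac : ∀ m ∈ Finset.Icc 1 n,
      Real.Gamma (s / 2 + 1/2 + ((m / 2 : ℕ) : ℝ)) / Real.Gamma (1/2 + ((m / 2 : ℕ) : ℝ)) ≠ 0 := by
    intro m _
    have h1 : (0:ℝ) < s / 2 + 1/2 + ((m / 2 : ℕ) : ℝ) := by
      have := arg_pos hs m; unfold aa at this; linarith
    have h2 : (0:ℝ) < 1/2 + ((m / 2 : ℕ) : ℝ) := by
      have := aa_pos m; unfold aa at this; linarith
    exact div_ne_zero (Real.Gamma_pos_of_pos h1).ne' (Real.Gamma_pos_of_pos h2).ne'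
  have hprod : ∏ m ∈ Finset.Icc 1 n,
      Real.Gamma (s / 2 + 1/2 + ((m / 2 : ℕ) : ℝ)) / Real.Gamma (1/2 + ((m / 2 : ℕ) : ℝ)) ≠ 0 :=
    Finset.prod_ne_zero_iff.2 hfac
  rw [gueMgf, Real.log_mul (ne_of_gt (Real.rpow_pos_of_pos two_pos _)) hprod,
    Real.log_rpow two_pos, Real.log_prod hfac, F]
  congr 1
  · ring
  · apply Finset.sum_congr rfl
    intro m hm
    have h1 : (0:ℝ) < s / 2 + 1/2 + ((m / 2 : ℕ) : ℝ) := by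
      have := arg_pos hs m; unfold aa at this; linarith
    have h2 : (0:ℝ) < 1/2 + ((m / 2 : ℕ) : ℝ) := by
      have := aa_pos m; unfold aa at this; linarith
    rw [Real.log_div (Real.Gamma_pos_of_pos h1).ne' (Real.Gamma_pos_of_pos h2).ne',
      show s / 2 + 1/2 + ((m / 2 : ℕ) : ℝ) = s / 2 + aa m by unfold aa; ring,
      show (1:ℝ)/2 + ((m / 2 : ℕ) : ℝ) = aa m from rfl]

lemma hinner (m : ℕ) (s : ℝ) : HasDerivAt (fun s : ℝ => s / 2 + aa m) (1 / 2) s := by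
  simpa using ((hasDerivAt_id s).div_const 2).add_const (aa m)

lemma claimA {n : ℕ} {s : ℝ} (hs : s ∈ Set.Ioi (-1:ℝ)) :
    HasDerivAt (F n) ((n : ℝ) * Real.log 2 / 2
      + ∑ m ∈ Finset.Icc 1 n, dg (s / 2 + aa m) * (1 / 2)) s := by
  have hs' : -1 < s := hs
  have part1 : HasDerivAt (fun s : ℝ => s * ((n : ℝ) * Real.log 2 / 2))
      ((n : ℝ) * Real.log 2 / 2) s := by
    simpa using (hasDerivAt_id s).mul_const ((n : ℝ) * Real.log 2 / 2)
  have part2 : HasDerivAt (fun s : ℝ => ∑ m ∈ Finset.Icc 1 n,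
      (Real.log (Real.Gamma (s / 2 + aa m)) - Real.log (Real.Gamma (aa m))))
      (∑ m ∈ Finset.Icc 1 n, dg (s / 2 + aa m) * (1 / 2)) s := by
    apply HasDerivAt.fun_sum
    intro m _
    have h := (hasDerivAt_logGamma (arg_pos hs' m)).comp s (hinner m s)
    exact (h.sub_const _)
  exact part1.add part2

lemma claimB {n : ℕ} {s : ℝ} (hs : s ∈ Set.Ioi (-1:ℝ)) :
    HasDerivAt (fun t : ℝ => (n : ℝ) * Real.log 2 / 2
        + ∑ m ∈ Finset.Icc 1 n, dg (t / 2 + aa m) * (1 / 2))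
      (((-1:ℝ) ^ 2 * ((2 - 1).factorial : ℕ) / 2 ^ 2) * G 2 n s) s := by
  have hs' : -1 < s := hs
  have part2 : HasDerivAt (fun t : ℝ => ∑ m ∈ Finset.Icc 1 n, dg (t / 2 + aa m) * (1 / 2))
      (∑ m ∈ Finset.Icc 1 n, pg 2 (s / 2 + aa m) * (1 / 2) * (1 / 2)) s := by
    apply HasDerivAt.fun_sum
    intro m _
    exact (((hasDerivAt_dg (arg_pos hs' m)).comp s (hinner m s)).mul_const (1/2))
  have := part2.const_add ((n : ℝ) * Real.log 2 / 2)
  refine this.congr_deriv ?_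
  rw [G, Finset.mul_sum]
  apply Finset.sum_congr rfl
  intro m _
  have hco : ((-1:ℝ) ^ 2 * (((2 - 1).factorial : ℕ) : ℝ) / 2 ^ 2) = (1/2) * (1/2) := by
    norm_num [Nat.factorial]
  rw [hco]
  ring

lemma claimC {k n : ℕ} (hk : 2 ≤ k) {s : ℝ} (hs : s ∈ Set.Ioi (-1:ℝ)) :
    HasDerivAt (G k n) (-(k : ℝ) / 2 * G (k + 1) n s) s := by
  have hs' : -1 < s := hs
  have part : HasDerivAt (fun t : ℝ => ∑ m ∈ Finset.Icc 1 n, pg k (t / 2 + aa m))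
      (∑ m ∈ Finset.Icc 1 n, -(k : ℝ) * pg (k + 1) (s / 2 + aa m) * (1 / 2)) s := by
    apply HasDerivAt.fun_sum
    intro m _
    exact ((hasDerivAt_pg hk (arg_pos hs' m)).comp s (hinner m s))
  have hG : G k n = fun t : ℝ => ∑ m ∈ Finset.Icc 1 n, pg k (t / 2 + aa m) := rfl
  rw [hG]
  convert part using 1
  rw [G, Finset.mul_sum]
  apply Finset.sum_congr rfl
  intro m _
  ring

lemma iter_formula (n : ℕ) {j : ℕ} (hj : 2 ≤ j) :
    ∀ s ∈ Set.Ioi (-1:ℝ), iteratedDeriv j (F n) s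
      = ((-1:ℝ) ^ j * ((j - 1).factorial : ℕ) / 2 ^ j) * G j n s := by
  induction j, hj using Nat.le_induction with
  | base =>
      intro s hs
      rw [show (2:ℕ) = 1 + 1 from rfl, iteratedDeriv_succ, iteratedDeriv_one]
      have hev : deriv (F n) =ᶠ[𝓝 s] (fun t : ℝ => (n : ℝ) * Real.log 2 / 2
          + ∑ m ∈ Finset.Icc 1 n, dg (t / 2 + aa m) * (1 / 2)) :=
        Filter.eventuallyEq_of_mem (isOpen_Ioi.mem_nhds hs) (fun t ht => (claimA ht).deriv)
      rw [hev.deriv_eq, (claimB hs).deriv]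
  | succ j hj ih =>
      intro s hs
      rw [iteratedDeriv_succ]
      have hev : iteratedDeriv j (F n) =ᶠ[𝓝 s]
          (fun t : ℝ => ((-1:ℝ) ^ j * ((j - 1).factorial : ℕ) / 2 ^ j) * G j n t) :=
        Filter.eventuallyEq_of_mem (isOpen_Ioi.mem_nhds hs) (fun t ht => ih t ht)
      rw [hev.deriv_eq, (((claimC hj hs)).const_mul
        ((-1:ℝ) ^ j * ((j - 1).factorial : ℕ) / 2 ^ j)).deriv]
      have hjj : j - 1 + 1 = j := by omega
      have hfac : ((j + 1 - 1).factorial : ℝ) = (j : ℝ) * ((j - 1).factorial : ℕ) := by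
        have : (j + 1 - 1).factorial = j * (j - 1).factorial := by
          rw [Nat.add_sub_cancel]
          conv_lhs => rw [← hjj]
          rw [Nat.factorial_succ, hjj]
        rw [this]
        push_cast
        ring
      rw [hfac]
      rw [pow_succ, pow_succ]
      ring

lemma per_m {j : ℕ} (hj : 3 ≤ j) {m : ℕ} (hm : 1 ≤ m) :
    (1 / 2 ^ j) * pg j (aa m) ≤ 2 / (m : ℝ) ^ 2 := by
  have hm1 : (1:ℝ) ≤ (m : ℝ) := by exact_mod_cast hm
  have h1 : (1 / (2:ℝ) ^ j) * pg j (aa m)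
      = ∑' k : ℕ, (1 / (2:ℝ) ^ j) * (1 / (aa m + (k:ℝ)) ^ j) := by
    rw [pg, tsum_mul_left]
  have h2 : ∀ k : ℕ, (1 / (2:ℝ) ^ j) * (1 / (aa m + (k:ℝ)) ^ j) ≤ 1 / ((m : ℝ) + k) ^ 3 := by
    intro k
    have hk0 : (0:ℝ) ≤ (k : ℝ) := Nat.cast_nonneg k
    have hmk1 : (1:ℝ) ≤ (m : ℝ) + k := by linarith
    have haap : 0 < aa m := aa_pos m
    have hle : (m : ℝ) + k ≤ 2 * (aa m + (k:ℝ)) := by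
      have := two_aa m
      linarith
    have e1 : (1 / (2:ℝ) ^ j) * (1 / (aa m + (k:ℝ)) ^ j) = 1 / (2 * (aa m + (k:ℝ))) ^ j := by
      rw [mul_pow, div_mul_div_comm, one_mul]
    rw [e1]
    calc 1 / (2 * (aa m + (k:ℝ))) ^ j ≤ 1 / ((m : ℝ) + k) ^ j := by
          apply one_div_le_one_div_of_le (by positivity)
          exact pow_le_pow_left₀ (by positivity) hle j
      _ ≤ 1 / ((m : ℝ) + k) ^ 3 := by
          apply one_div_le_one_div_of_le (by positivity)
          exact pow_le_pow_right₀ hmk1 hj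
  have hsumL : Summable fun k : ℕ => (1 / (2:ℝ) ^ j) * (1 / (aa m + (k:ℝ)) ^ j) :=
    (summable_pg (aa_pos m) (by omega)).mul_left _
  have hsumR : Summable fun k : ℕ => 1 / ((m:ℝ) + (k:ℝ)) ^ 3 :=
    summable_pg (by linarith) (by omega)
  calc (1 / 2 ^ j) * pg j (aa m)
      = ∑' k : ℕ, (1 / (2:ℝ) ^ j) * (1 / (aa m + (k:ℝ)) ^ j) := h1
    _ ≤ ∑' k : ℕ, 1 / ((m:ℝ) + (k:ℝ)) ^ 3 := Summable.tsum_le_tsum h2 hsumL hsumR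
    _ = pg 3 (m:ℝ) := rfl
    _ ≤ 2 / (m:ℝ) ^ 2 := pg3_le hm1


end GueAux

open GueAux in
theorem gueCumulant_bound :
    ∃ C : ℝ, ∀ j : ℕ, 3 ≤ j → ∀ n : ℕ, 1 ≤ n →
      |gueCumulant j n| ≤ C * (Nat.factorial j : ℝ) := by
  refine ⟨4, fun j hj n _ => ?_⟩
  have h0 : (0:ℝ) ∈ Set.Ioi (-1:ℝ) := by norm_num
  have heq : gueCumulant j n = ((-1:ℝ) ^ j * ((j - 1).factorial : ℕ) / 2 ^ j) * G j n 0 := by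
    rw [gueCumulant]
    have hev : (fun s => Real.log (gueMgf n s)) =ᶠ[𝓝 (0:ℝ)] F n :=
      Filter.eventuallyEq_of_mem (isOpen_Ioi.mem_nhds h0) (fun t ht => log_gueMgf_eq ht)
    rw [hev.iteratedDeriv_eq j]
    exact iter_formula n (by omega) 0 h0
  have hGnonneg : 0 ≤ G j n 0 := by
    apply Finset.sum_nonneg
    intro m _
    have : (0:ℝ) < 0 / 2 + aa m := by
      have := aa_pos m; norm_num [this]
    exact pg_nonneg j this
  rw [heq, abs_mul]
  have habs : |(-1:ℝ) ^ j * (((j - 1).factorial : ℕ) : ℝ) / 2 ^ j|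
      = (((j - 1).factorial : ℕ) : ℝ) / 2 ^ j := by
    rw [abs_div, abs_mul, abs_pow, abs_neg, abs_one, one_pow, one_mul,
      abs_of_nonneg (by positivity : (0:ℝ) ≤ (((j - 1).factorial : ℕ) : ℝ)),
      abs_of_nonneg (by positivity : (0:ℝ) ≤ (2:ℝ) ^ j)]
  rw [habs, abs_of_nonneg hGnonneg]
  have key : (((j - 1).factorial : ℕ) : ℝ) / 2 ^ j * G j n 0
      ≤ (((j - 1).factorial : ℕ) : ℝ) * 4 := by
    have e1 : (((j - 1).factorial : ℕ) : ℝ) / 2 ^ j * G j n 0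
        = (((j - 1).factorial : ℕ) : ℝ) * ∑ m ∈ Finset.Icc 1 n, (1 / 2 ^ j) * pg j (0 / 2 + aa m) := by
      rw [G, Finset.mul_sum, Finset.mul_sum]
      apply Finset.sum_congr rfl
      intro m _
      ring
    rw [e1]
    have hsum : ∑ m ∈ Finset.Icc 1 n, (1 / 2 ^ j) * pg j (0 / 2 + aa m) ≤ 4 := by
      calc ∑ m ∈ Finset.Icc 1 n, (1 / 2 ^ j) * pg j (0 / 2 + aa m)
          ≤ ∑ m ∈ Finset.Icc 1 n, 2 / (m : ℝ) ^ 2 := by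
            apply Finset.sum_le_sum
            intro m hm
            have : (0:ℝ) / 2 + aa m = aa m := by norm_num
            rw [this]
            exact per_m hj (Finset.mem_Icc.1 hm).1
        _ ≤ 4 := sum_Icc_two_div_sq_le n
    exact mul_le_mul_of_nonneg_left hsum (by positivity)
  calc (((j - 1).factorial : ℕ) : ℝ) / 2 ^ j * G j n 0
      ≤ (((j - 1).factorial : ℕ) : ℝ) * 4 := key
    _ ≤ 4 * (j.factorial : ℝ) := by
        have : (j - 1).factorial ≤ j.factorial := Nat.factorial_le (by omega)
        have h' : (((j - 1).factorial : ℕ) : ℝ) ≤ (j.factorial : ℝ) := by exact_mod_cast this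
        linarith
end

section
/- For the GUE with n = 2k+1 odd, the j-th cumulant of log|det X_n| satisfies Γ_j(n,2) = (−1)^j·(j−1)!·∑_{m=0}^{k} 1/(2m+1)^{j−1} + (−1)^j·(j−1)!·(2k+1)·∑_{m=k+1}^{∞} 1/(2m+1)^{j} for every integer j ≥ 2. -/
open Real Filter Finset Topology Set



/-- Summability of `1/(c+i)^p` for `c > 0`, `2 ≤ p`. -/
lemma summable_shift_pow (c : ℝ) (hc : 0 < c) (p : ℕ) (hp : 2 ≤ p) :
    Summable (fun i : ℕ => 1 / (c + i) ^ p) := by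
  have hd : 0 < min c 1 := lt_min hc one_pos
  have key : ∀ i : ℕ, 1 / (c + i) ^ p ≤ (1 / min c 1 ^ p) * (1 / ((i : ℝ) + 1) ^ p) := by
    intro i
    have h1 : min c 1 * ((i : ℝ) + 1) ≤ c + i := by
      rcases le_total c 1 with h | h
      · rw [min_eq_left h]; nlinarith [Nat.cast_nonneg (α := ℝ) i]
      · rw [min_eq_right h]; push_cast; nlinarith [Nat.cast_nonneg (α := ℝ) i]
    have h2 : (0:ℝ) < min c 1 * ((i : ℝ) + 1) := by positivity
    have h3 : (min c 1 * ((i : ℝ) + 1)) ^ p ≤ (c + i) ^ p :=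
      pow_le_pow_left₀ h2.le h1 p
    rw [one_div, one_div, one_div, ← mul_inv, ← mul_pow]
    exact inv_anti₀ (by positivity) h3
  have hs : Summable (fun i : ℕ => (1 / min c 1 ^ p) * (1 / ((i : ℝ) + 1) ^ p)) := by
    apply Summable.mul_left
    have := (summable_one_div_nat_pow (p := p)).2 (by omega)
    exact_mod_cast (summable_nat_add_iff 1).2 this
  exact Summable.of_nonneg_of_le (fun i => by positivity) key hs

lemma log_one_add_le {t : ℝ} (ht : 0 ≤ t) : Real.log (1 + t) ≤ t := by
  have := Real.log_le_sub_one_of_pos (x := 1 + t) (by linarith)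
  linarith

lemma le_log_one_add {t : ℝ} (ht : 0 ≤ t) : t / (1 + t) ≤ Real.log (1 + t) := by
  have h0 : (0:ℝ) < 1 + t := by linarith
  have := Real.log_le_sub_one_of_pos (x := (1 + t)⁻¹) (by positivity)
  rw [Real.log_inv] at this
  have h2 : (1 + t)⁻¹ - 1 = -(t / (1 + t)) := by field_simp; ring
  linarith [this, h2 ▸ this]

/-- The Weierstrass-product term. -/
noncomputable def wTerm (x : ℝ) (i : ℕ) : ℝ := x / (i + 1) - Real.log (1 + x / (i + 1))

lemma wTerm_nonneg {x : ℝ} (hx : 0 ≤ x) (i : ℕ) : 0 ≤ wTerm x i := by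
  have ht : (0:ℝ) ≤ x / (i + 1) := by positivity
  have := log_one_add_le ht
  simp only [wTerm]; linarith

lemma wTerm_le {x : ℝ} (hx : 0 ≤ x) (i : ℕ) : wTerm x i ≤ x ^ 2 * (1 / ((i:ℝ) + 1) ^ 2) := by
  set t : ℝ := x / (i + 1) with htdef
  have ht : (0:ℝ) ≤ t := by positivity
  have h1 : t / (1 + t) ≤ Real.log (1 + t) := le_log_one_add ht
  have h2 : t - t / (1 + t) ≤ t ^ 2 := by
    have h0 : (0:ℝ) < 1 + t := by linarith
    rw [div_le_iff₀ h0] at *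
    have : t - t / (1 + t) = t ^ 2 / (1 + t) := by field_simp; ring
    rw [this, div_le_iff₀ h0]
    nlinarith
  have h3 : t ^ 2 = x ^ 2 * (1 / ((i:ℝ) + 1) ^ 2) := by
    rw [htdef]; field_simp
  simp only [wTerm]
  calc x / (↑i + 1) - Real.log (1 + x / (↑i + 1)) = t - Real.log (1 + t) := rfl
    _ ≤ t - t / (1 + t) := by linarith
    _ ≤ t ^ 2 := h2
    _ = _ := h3

lemma summable_wTerm {x : ℝ} (hx : 0 ≤ x) : Summable (wTerm x) := by
  refine Summable.of_nonneg_of_le (wTerm_nonneg hx) (wTerm_le hx) ?_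
  apply Summable.mul_left
  have := (summable_one_div_nat_pow (p := 2)).2 one_lt_two
  exact_mod_cast (summable_nat_add_iff 1).2 this




/-- Weierstrass product formula (log form). -/
lemma log_Gamma_eq {x : ℝ} (hx : 0 < x) :
    Real.log (Real.Gamma x)
      = -Real.log x - Real.eulerMascheroniConstant * x + ∑' i, wTerm x i := by
  have hsum := summable_wTerm hx.le
  have hps : ∀ n : ℕ, ∑ i ∈ range n, wTerm x i
      = Real.BohrMollerup.logGammaSeq x n + x * ((harmonic n : ℝ) - Real.log n) + Real.log x := by
    intro n
    set A : ℝ := ∑ i ∈ range n, Real.log (x + (i + 1)) with hA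
    have hfac : ∑ i ∈ range n, Real.log ((i:ℝ) + 1) = Real.log (Nat.factorial n : ℝ) := by
      rw [← Real.log_prod (s := range n) (f := fun i : ℕ => (i:ℝ) + 1) (fun i _ => by positivity)]
      congr 1
      rw [← Finset.prod_range_add_one_eq_factorial]
      push_cast
      ring
    have hharm : x * (harmonic n : ℝ) = ∑ i ∈ range n, x / ((i:ℝ) + 1) := by
      unfold harmonic
      push_cast
      rw [Finset.mul_sum]
      exact Finset.sum_congr rfl fun i _ => by rw [div_eq_mul_inv]
    have hW : ∑ i ∈ range n, wTerm x i
        = x * (harmonic n : ℝ) - A + Real.log (Nat.factorial n : ℝ) := by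
      simp only [wTerm, Finset.sum_sub_distrib]
      rw [← hharm]
      have hlog : ∑ i ∈ range n, Real.log (1 + x / (i + 1))
          = A - ∑ i ∈ range n, Real.log ((i:ℝ) + 1) := by
        rw [hA, ← Finset.sum_sub_distrib]
        refine Finset.sum_congr rfl fun i _ => ?_
        rw [← Real.log_div (by positivity) (by positivity)]
        congr 1
        field_simp
        ring
      rw [hlog, hfac]
      ring
    have hL : Real.BohrMollerup.logGammaSeq x n
        = x * Real.log n + Real.log (Nat.factorial n : ℝ) - (Real.log x + A) := by
      rw [Real.BohrMollerup.logGammaSeq, hA]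
      congr 1
      rw [Finset.sum_range_succ']
      push_cast
      norm_num [add_comm]
    rw [hW, hL]
    ring
  have h1 : Tendsto (fun n : ℕ => ∑ i ∈ range n, wTerm x i) atTop
      (𝓝 (Real.log (Real.Gamma x) + x * Real.eulerMascheroniConstant + Real.log x)) := by
    have hA := Real.BohrMollerup.tendsto_log_gamma hx
    have hB : Tendsto (fun n : ℕ => x * ((harmonic n : ℝ) - Real.log n)) atTop
        (𝓝 (x * Real.eulerMascheroniConstant)) := Real.tendsto_harmonic_sub_log.const_mul x
    have := (hA.add hB).add_const (Real.log x)
    exact Tendsto.congr (fun n => (hps n).symm) this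
  have h2 : Tendsto (fun n : ℕ => ∑ i ∈ range n, wTerm x i) atTop (𝓝 (∑' i, wTerm x i)) :=
    hsum.hasSum.tendsto_sum_nat
  have := tendsto_nhds_unique h2 h1
  rw [this]
  ring




noncomputable def dTerm (x : ℝ) (i : ℕ) : ℝ := 1 / ((i:ℝ) + 1) - 1 / (x + i + 1)

noncomputable def dlG (x : ℝ) : ℝ :=
  -(1 / x) - Real.eulerMascheroniConstant + ∑' i, dTerm x i

noncomputable def Pser (j : ℕ) (x : ℝ) : ℝ := ∑' i : ℕ, 1 / (x + i) ^ j

lemma summable_sq_aux : Summable (fun i : ℕ => 1 / ((i:ℝ) + 1) ^ 2) := by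
  exact_mod_cast (summable_nat_add_iff 1).2 ((summable_one_div_nat_pow (p := 2)).2 one_lt_two)

lemma dTerm_eq {x : ℝ} (hx : 0 < x) (i : ℕ) :
    dTerm x i = x / (((i:ℝ) + 1) * (x + i + 1)) := by
  have h1 : (0:ℝ) < (i:ℝ) + 1 := by positivity
  have h2 : (0:ℝ) < x + i + 1 := by positivity
  rw [dTerm]; field_simp; ring

lemma dTerm_nonneg {x : ℝ} (hx : 0 < x) (i : ℕ) : 0 ≤ dTerm x i := by
  rw [dTerm_eq hx]; positivity

lemma dTerm_le {x y : ℝ} (hy : 0 < y) (hxy : y ≤ x + 1) (hx : 0 < x) (i : ℕ) :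
    dTerm y i ≤ (x + 1) * (1 / ((i:ℝ) + 1) ^ 2) := by
  rw [dTerm_eq hy, mul_one_div]
  have h1 : (0:ℝ) < (i:ℝ) + 1 := by positivity
  have h2 : ((i:ℝ) + 1) ^ 2 = ((i:ℝ)+1) * ((i:ℝ)+1) := sq ((i:ℝ)+1)
  rw [h2]
  refine div_le_div₀ (by positivity) hxy (by positivity) ?_
  nlinarith [Nat.cast_nonneg (α := ℝ) i]

lemma summable_dTerm {x : ℝ} (hx : 0 < x) : Summable (dTerm x) :=
  Summable.of_nonneg_of_le (dTerm_nonneg hx)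
    (fun i => dTerm_le hx (by linarith) hx i) (summable_sq_aux.mul_left _)

lemma hasDerivAt_wTerm {y : ℝ} (hy : 0 < y) (i : ℕ) :
    HasDerivAt (fun z => wTerm z i) (dTerm y i) y := by
  have h0 : (0:ℝ) < (i:ℝ) + 1 := by positivity
  have h1 : HasDerivAt (fun z : ℝ => z / ((i:ℝ) + 1)) (1 / ((i:ℝ) + 1)) y := by
    simpa using (hasDerivAt_id y).div_const ((i:ℝ) + 1)
  have hpos : (0:ℝ) < 1 + y / ((i:ℝ) + 1) := by positivity
  have h3 := (h1.const_add 1).log hpos.ne'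
  have h4 := h1.sub h3
  refine h4.congr_deriv ?_
  rw [dTerm]
  congr 1
  field_simp
  ring

lemma hasDerivAt_dTerm {y : ℝ} (hy : 0 < y) (i : ℕ) :
    HasDerivAt (fun z => dTerm z i) (1 / (y + i + 1) ^ 2) y := by
  have h2 : (0:ℝ) < y + i + 1 := by positivity
  have h1 : HasDerivAt (fun z : ℝ => z + ((i:ℝ) + 1)) 1 y := (hasDerivAt_id y).add_const _
  have hne : y + ((i:ℝ) + 1) ≠ 0 := by positivity
  have h3 := h1.inv hne
  have h4 := (hasDerivAt_const y (1 / ((i:ℝ) + 1))).sub h3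
  have e1 : (0:ℝ) - -1 / (y + ((i:ℝ) + 1)) ^ 2 = 1 / (y + i + 1) ^ 2 := by ring
  refine (h4.congr_deriv e1).congr_of_eventuallyEq (Filter.Eventually.of_forall fun z => ?_)
  show dTerm z i = 1 / ((i:ℝ) + 1) - (z + ((i:ℝ) + 1))⁻¹
  rw [dTerm, one_div]; ring_nf

lemma hasDerivAt_wsum {x : ℝ} (hx : 0 < x) :
    HasDerivAt (fun y => ∑' i, wTerm y i) (∑' i, dTerm x i) x := by
  have hu : Summable (fun i : ℕ => (x + 1) * (1 / ((i:ℝ) + 1) ^ 2)) :=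
    summable_sq_aux.mul_left _
  refine hasDerivAt_tsum_of_isPreconnected hu isOpen_Ioo (convex_Ioo (0:ℝ) (x+1)).isPreconnected
    (fun i y hy => hasDerivAt_wTerm hy.1 i) (fun i y hy => ?_)
    (⟨hx, by linarith⟩ : x ∈ Ioo (0:ℝ) (x+1)) (summable_wTerm hx.le)
    (⟨hx, by linarith⟩ : x ∈ Ioo (0:ℝ) (x+1))
  rw [Real.norm_eq_abs, abs_of_nonneg (dTerm_nonneg hy.1 i)]
  exact dTerm_le hy.1 hy.2.le hx i

lemma hasDerivAt_dsum {x : ℝ} (hx : 0 < x) :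
    HasDerivAt (fun y => ∑' i, dTerm y i) (∑' i : ℕ, 1 / (x + i + 1) ^ 2) x := by
  have hc : (0:ℝ) < x / 2 + 1 := by positivity
  have hu : Summable (fun i : ℕ => 1 / (x / 2 + 1 + (i:ℝ)) ^ 2) :=
    summable_shift_pow _ hc 2 le_rfl
  refine hasDerivAt_tsum_of_isPreconnected hu isOpen_Ioo
    (convex_Ioo (x/2) (x+1)).isPreconnected
    (fun i y hy => hasDerivAt_dTerm (by have := hy.1; linarith) i) (fun i y hy => ?_)
    (⟨by linarith, by linarith⟩ : x ∈ Ioo (x/2) (x+1)) (summable_dTerm hx)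
    (⟨by linarith, by linarith⟩ : x ∈ Ioo (x/2) (x+1))
  have h2 : (0:ℝ) < y + i + 1 := by have := hy.1; linarith
  rw [Real.norm_eq_abs, abs_of_nonneg (by positivity)]
  have h3 : x / 2 + 1 + (i:ℝ) ≤ y + i + 1 := by have := hy.1; linarith
  gcongr

lemma summable_Pser {x : ℝ} (hx : 0 < x) {j : ℕ} (hj : 2 ≤ j) :
    Summable (fun i : ℕ => 1 / (x + i) ^ j) := summable_shift_pow x hx j hj

lemma hasDerivAt_dlG {x : ℝ} (hx : 0 < x) : HasDerivAt dlG (Pser 2 x) x := by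
  have h1 : HasDerivAt (fun y : ℝ => -(1 / y)) (1 / x ^ 2) x := by
    have := (hasDerivAt_inv hx.ne').neg
    have e1 : - -(x ^ 2)⁻¹ = 1 / x ^ 2 := by rw [one_div]; ring
    refine (this.congr_deriv e1).congr_of_eventuallyEq (Filter.Eventually.of_forall fun z => ?_)
    show -(1 / z) = -(z⁻¹)
    rw [one_div]
  have h := (h1.sub_const Real.eulerMascheroniConstant).add (hasDerivAt_dsum hx)
  have heq : (fun y : ℝ => -(1/y) - Real.eulerMascheroniConstant + ∑' i, dTerm y i) = dlG := rfl
  replace h : HasDerivAt dlG _ x := h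
  refine h.congr_deriv (Eq.symm ?_)
  rw [Pser, (summable_Pser hx le_rfl).tsum_eq_zero_add]
  congr 1
  · norm_num
  · exact tsum_congr fun i => by push_cast; ring_nf

lemma hasDerivAt_logGamma {x : ℝ} (hx : 0 < x) :
    HasDerivAt (fun y => Real.log (Real.Gamma y)) (dlG x) x := by
  have h1 : HasDerivAt (fun y : ℝ => -Real.log y - Real.eulerMascheroniConstant * y
      + ∑' i, wTerm y i) (dlG x) x := by
    have ha := (Real.hasDerivAt_log hx.ne').neg
    have hb : HasDerivAt (fun y : ℝ => Real.eulerMascheroniConstant * y)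
        Real.eulerMascheroniConstant x := by
      simpa using (hasDerivAt_id x).const_mul Real.eulerMascheroniConstant
    have := (ha.sub hb).add (hasDerivAt_wsum hx)
    refine this.congr_deriv (Eq.symm ?_)
    rw [dlG, one_div]
  refine h1.congr_of_eventuallyEq ?_
  filter_upwards [Ioi_mem_nhds hx] with y hy
  exact log_Gamma_eq hy

lemma hasDerivAt_Pser {x : ℝ} (hx : 0 < x) {j : ℕ} (hj : 2 ≤ j) :
    HasDerivAt (Pser j) (-(j:ℝ) * Pser (j+1) x) x := by
  have hc : (0:ℝ) < x / 2 := by positivity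
  have hu : Summable (fun i : ℕ => (j:ℝ) * (1 / (x / 2 + (i:ℝ)) ^ (j+1))) :=
    (summable_shift_pow _ hc (j+1) (by omega)).mul_left _
  have key := hasDerivAt_tsum_of_isPreconnected (y₀ := x) (y := x) hu isOpen_Ioo
    (convex_Ioo (x/2) (x+1)).isPreconnected
    (g := fun (i : ℕ) (y : ℝ) => 1 / (y + i) ^ j)
    (g' := fun (i : ℕ) (y : ℝ) => -(j:ℝ) / (y + i) ^ (j+1))
    (fun i y hy => by
      have hyi : (0:ℝ) < y + i := by
        have h := hy.1; have h2 := Nat.cast_nonneg (α := ℝ) i; linarith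
      have h1 : HasDerivAt (fun z : ℝ => (z + (i:ℝ)) ^ j) ((j:ℝ) * (y + i) ^ (j-1)) y := by
        exact (((hasDerivAt_id' y).add_const ((i:ℝ))).pow j).congr_deriv (by ring)
      have h2 : HasDerivAt (fun z : ℝ => ((z + (i:ℝ)) ^ j)⁻¹) _ y := h1.inv (pow_ne_zero j hyi.ne')
      have heq : (fun z : ℝ => ((z + (i:ℝ)) ^ j)⁻¹) = fun z : ℝ => 1 / (z + i) ^ j := by
        funext z; rw [one_div]
      rw [heq] at h2
      refine h2.congr_deriv (Eq.symm ?_)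
      show -(j:ℝ) / (y + (i:ℝ)) ^ (j+1) = -(↑j * (y + ↑i) ^ (j - 1)) / ((y + ↑i) ^ j) ^ 2
      rw [div_eq_div_iff (pow_pos hyi _).ne' (pow_pos (pow_pos hyi _) 2).ne']
      rw [neg_mul, neg_mul, neg_inj, mul_assoc, ← pow_add, ← pow_mul]
      have hexp : j * 2 = j - 1 + (j + 1) := by omega
      rw [hexp])
    (fun i y hy => by
      have hy1 : (x:ℝ)/2 < y := hy.1
      have hyi : (0:ℝ) < y + i := by
        have h2 := Nat.cast_nonneg (α := ℝ) i; linarith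
      show ‖-(j:ℝ) / (y + (i:ℝ)) ^ (j+1)‖ ≤ (j:ℝ) * (1 / (x / 2 + (i:ℝ)) ^ (j+1))
      rw [Real.norm_eq_abs, abs_div, abs_neg, Nat.abs_cast, abs_of_pos (pow_pos hyi _),
        mul_one_div]
      have h3 : x / 2 + (i:ℝ) ≤ y + i := by linarith
      gcongr)
    (⟨by linarith, by linarith⟩ : x ∈ Ioo (x/2) (x+1)) (summable_Pser hx hj)
    (⟨by linarith, by linarith⟩ : x ∈ Ioo (x/2) (x+1))
  have : HasDerivAt (Pser j) (∑' i : ℕ, -(j:ℝ) / (x + i) ^ (j+1)) x := key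
  refine this.congr_deriv (Eq.symm ?_)
  rw [Pser, ← tsum_mul_left]
  refine (tsum_congr fun i => ?_).symm
  rw [neg_div, mul_one_div, neg_div]





lemma arg_pos {s : ℝ} (hs : -1 < s) (m : ℕ) : 0 < s / 2 + 1/2 + ((m / 2 : ℕ) : ℝ) := by
  have := Nat.cast_nonneg (α := ℝ) (m / 2)
  linarith

lemma arg_pos' (m : ℕ) : 0 < 1/2 + ((m / 2 : ℕ) : ℝ) := by
  have := Nat.cast_nonneg (α := ℝ) (m / 2)
  linarith

lemma logMgf_eq (n : ℕ) {s : ℝ} (hs : -1 < s) :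
    Real.log (gueMgf n s) = ((n:ℝ) * s / 2) * Real.log 2
      + ∑ m ∈ Finset.Icc 1 n,
          (Real.log (Real.Gamma (s / 2 + 1/2 + (m / 2 : ℕ)))
            - Real.log (Real.Gamma (1/2 + (m / 2 : ℕ)))) := by
  have h1 : ∀ m ∈ Finset.Icc 1 n,
      Real.Gamma (s / 2 + 1/2 + (m / 2 : ℕ)) / Real.Gamma (1/2 + (m / 2 : ℕ)) ≠ 0 := by
    intro m _
    exact div_ne_zero (Real.Gamma_pos_of_pos (arg_pos hs m)).ne'
      (Real.Gamma_pos_of_pos (arg_pos' m)).ne'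
  rw [gueMgf, Real.log_mul (by positivity) (Finset.prod_ne_zero_iff.2 h1),
    Real.log_rpow two_pos, Real.log_prod h1]
  congr 1
  refine Finset.sum_congr rfl fun m _ => ?_
  rw [Real.log_div (Real.Gamma_pos_of_pos (arg_pos hs m)).ne'
    (Real.Gamma_pos_of_pos (arg_pos' m)).ne']

lemma hasDerivAt_inner (s : ℝ) (c : ℝ) :
    HasDerivAt (fun t : ℝ => t / 2 + 1/2 + c) (1/2) s := by
  simpa using (((hasDerivAt_id s).div_const 2).add_const (1/2 : ℝ)).add_const c

lemma deriv1 (n : ℕ) {s : ℝ} (hs : -1 < s) :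
    HasDerivAt (fun t => Real.log (gueMgf n t))
      ((n:ℝ) / 2 * Real.log 2
        + ∑ m ∈ Finset.Icc 1 n, dlG (s / 2 + 1/2 + (m / 2 : ℕ)) * (1/2)) s := by
  have hG : HasDerivAt (fun t : ℝ => ((n:ℝ) * t / 2) * Real.log 2
      + ∑ m ∈ Finset.Icc 1 n,
          (Real.log (Real.Gamma (t / 2 + 1/2 + (m / 2 : ℕ)))
            - Real.log (Real.Gamma (1/2 + (m / 2 : ℕ)))))
      ((n:ℝ) / 2 * Real.log 2
        + ∑ m ∈ Finset.Icc 1 n, dlG (s / 2 + 1/2 + (m / 2 : ℕ)) * (1/2)) s := by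
    have ha : HasDerivAt (fun t : ℝ => ((n:ℝ) * t / 2) * Real.log 2)
        ((n:ℝ) / 2 * Real.log 2) s := by
      simpa using (((hasDerivAt_id s).const_mul (n:ℝ)).div_const 2).mul_const (Real.log 2)
    refine ha.add (HasDerivAt.fun_sum fun m _ => ?_)
    have hcomp := (hasDerivAt_logGamma (arg_pos hs m)).comp s
      (hasDerivAt_inner s ((m / 2 : ℕ) : ℝ))
    exact hcomp.sub_const _
  refine hG.congr_of_eventuallyEq ?_
  filter_upwards [Ioi_mem_nhds hs] with t ht
  exact logMgf_eq n ht

lemma derivG1 (n : ℕ) {s : ℝ} (hs : -1 < s) :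
    HasDerivAt (fun t : ℝ => (n:ℝ) / 2 * Real.log 2
        + ∑ m ∈ Finset.Icc 1 n, dlG (t / 2 + 1/2 + (m / 2 : ℕ)) * (1/2))
      (∑ m ∈ Finset.Icc 1 n, Pser 2 (s / 2 + 1/2 + (m / 2 : ℕ)) * (1/2) * (1/2)) s := by
  refine HasDerivAt.const_add _ (HasDerivAt.fun_sum fun m _ => ?_)
  have hcomp := (hasDerivAt_dlG (arg_pos hs m)).comp s
    (hasDerivAt_inner s ((m / 2 : ℕ) : ℝ))
  exact hcomp.mul_const (1/2)

lemma derivPsum (n : ℕ) {j : ℕ} (hj : 2 ≤ j) {s : ℝ} (hs : -1 < s) (C : ℝ) :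
    HasDerivAt (fun t : ℝ =>
        C * ∑ m ∈ Finset.Icc 1 n, Pser j (t / 2 + 1/2 + (m / 2 : ℕ)) * (1/2)^j)
      (C * ∑ m ∈ Finset.Icc 1 n,
        (-(j:ℝ) * Pser (j+1) (s / 2 + 1/2 + (m / 2 : ℕ)) * (1/2) * (1/2)^j)) s := by
  refine HasDerivAt.const_mul C (HasDerivAt.fun_sum fun m _ => ?_)
  have hcomp := (hasDerivAt_Pser (arg_pos hs m) hj).comp s
    (hasDerivAt_inner s ((m / 2 : ℕ) : ℝ))
  exact hcomp.mul_const ((1/2 : ℝ)^j)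

lemma iter_eq (n : ℕ) (j : ℕ) (hj : 2 ≤ j) :
    ∀ s : ℝ, -1 < s →
      iteratedDeriv j (fun t => Real.log (gueMgf n t)) s
        = (-1)^j * ((j-1).factorial : ℝ)
            * ∑ m ∈ Finset.Icc 1 n, Pser j (s / 2 + 1/2 + (m / 2 : ℕ)) * (1/2)^j := by
  induction j, hj using Nat.le_induction with
  | base =>
    intro s hs
    rw [iteratedDeriv_succ, iteratedDeriv_one]
    have hev : deriv (fun t => Real.log (gueMgf n t)) =ᶠ[𝓝 s]
        (fun t : ℝ => (n:ℝ) / 2 * Real.log 2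
          + ∑ m ∈ Finset.Icc 1 n, dlG (t / 2 + 1/2 + (m / 2 : ℕ)) * (1/2)) := by
      filter_upwards [Ioi_mem_nhds hs] with t ht
      exact (deriv1 n ht).deriv
    rw [hev.deriv_eq, (derivG1 n hs).deriv]
    simp only [Nat.factorial]
    push_cast
    rw [Finset.mul_sum]
    refine Finset.sum_congr rfl fun m _ => ?_
    ring
  | succ j hj ih =>
    intro s hs
    rw [iteratedDeriv_succ]
    have hev : iteratedDeriv j (fun t => Real.log (gueMgf n t)) =ᶠ[𝓝 s]
        (fun t : ℝ => (-1)^j * ((j-1).factorial : ℝ)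
          * ∑ m ∈ Finset.Icc 1 n, Pser j (t / 2 + 1/2 + (m / 2 : ℕ)) * (1/2)^j) := by
      filter_upwards [Ioi_mem_nhds hs] with t ht
      exact ih t ht
    rw [hev.deriv_eq, (derivPsum n hj hs ((-1)^j * ((j-1).factorial : ℝ))).deriv]
    have hfac : ((j+1-1).factorial : ℝ) = (j:ℝ) * ((j-1).factorial : ℝ) := by
      have h1 : j + 1 - 1 = j := rfl
      rw [h1]
      have := Nat.mul_factorial_pred (by omega : j ≠ 0)
      push_cast [← this]
      ring
    rw [hfac, Finset.mul_sum, Finset.mul_sum]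
    refine Finset.sum_congr rfl fun m _ => ?_
    rw [pow_succ, pow_succ]
    ring




/-- odd-denominator series terms -/
noncomputable def bT (j i : ℕ) : ℝ := 1 / (2 * (i:ℝ) + 1) ^ j

lemma summable_bT {j : ℕ} (hj : 2 ≤ j) : Summable (bT j) := by
  have h := (summable_shift_pow (1/2) (by norm_num) j hj).mul_left ((1/2 : ℝ)^j)
  refine h.congr fun i => ?_
  rw [bT, mul_one_div, div_eq_div_iff (by positivity) (by positivity), one_mul, ← mul_pow]
  congr 1
  ring

lemma Pser_half (j : ℕ) (l : ℕ) :
    Pser j (1/2 + (l:ℝ)) * (1/2)^j = ∑' i : ℕ, bT j (l + i) := by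
  rw [Pser, ← tsum_mul_right]
  refine tsum_congr fun i => ?_
  rw [bT, div_pow, one_pow, mul_one_div, div_div, ← mul_pow]
  congr 2
  push_cast
  ring

lemma comb (b : ℕ → ℝ) (hb : Summable b) (k : ℕ) :
    ∑ m ∈ Finset.Icc 1 (2*k+1), (∑' i : ℕ, b ((m/2) + i))
      = ∑ m ∈ Finset.range (k+1), (2*(m:ℝ)+1) * b m
        + (2*(k:ℝ)+1) * ∑' i : ℕ, b (i + (k+1)) := by
  induction k with
  | zero =>
    rw [show (2*0+1 : ℕ) = 1 from rfl]
    rw [Finset.Icc_self, Finset.sum_singleton]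
    have h0 : ∑' i : ℕ, b ((1/2 : ℕ) + i) = ∑' i : ℕ, b i :=
      tsum_congr fun i => by norm_num
    rw [h0, hb.tsum_eq_zero_add]
    have h1 : ∑' i : ℕ, b (i + 1) = ∑' i : ℕ, b (i + (0+1)) :=
      tsum_congr fun i => by norm_num
    simp [h1.symm]
  | succ k ih =>
    have hstep1 : (2*(k+1)+1 : ℕ) = (2*k+2) + 1 := by ring
    have hstep2 : (2*k+2 : ℕ) = (2*k+1) + 1 := by ring
    rw [hstep1, Finset.sum_Icc_succ_top (by omega), hstep2,
      Finset.sum_Icc_succ_top (by omega), ih]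
    have hd1 : ((2*k+1+1 : ℕ)/2) = k+1 := by omega
    have hd2 : ((2*k+2+1 : ℕ)/2) = k+1 := by omega
    rw [hd1, hd2]
    have hshift : Summable (fun i : ℕ => b (i + (k+1))) :=
      (summable_nat_add_iff (k+1)).2 hb
    have hT : ∑' i : ℕ, b (i + (k+1)) = b (k+1) + ∑' i : ℕ, b (i + (k+1+1)) := by
      rw [hshift.tsum_eq_zero_add]
      congr 1
      · norm_num
      · exact tsum_congr fun i => congrArg b (by omega)
    have hQ : ∑' i : ℕ, b ((k+1) + i) = ∑' i : ℕ, b (i + (k+1)) :=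
      tsum_congr fun i => congrArg b (add_comm _ _)
    rw [hQ, hT, Finset.sum_range_succ (fun m => (2*(m:ℝ)+1) * b m) (k+1)]
    push_cast
    ring


theorem gueCumulant_odd_formula (k : ℕ) (j : ℕ) (hj : 2 ≤ j) :
    gueCumulant j (2 * k + 1)
      = (-1) ^ j * (Nat.factorial (j - 1) : ℝ) *
          (∑ m ∈ Finset.range (k + 1), 1 / (2 * (m : ℝ) + 1) ^ (j - 1))
        + (-1) ^ j * (Nat.factorial (j - 1) : ℝ) * (2 * (k : ℝ) + 1) *
          ∑' m : ℕ, 1 / (2 * ((m : ℝ) + k + 1) + 1) ^ j := by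
  rw [gueCumulant, iter_eq (2*k+1) j hj 0 (by norm_num)]
  have hP : ∀ m : ℕ, Pser j ((0:ℝ) / 2 + 1/2 + (m / 2 : ℕ)) * (1/2)^j
      = ∑' i : ℕ, bT j ((m/2) + i) := by
    intro m
    rw [show (0:ℝ)/2 + 1/2 + ((m/2 : ℕ):ℝ) = 1/2 + ((m/2 : ℕ):ℝ) by ring]
    exact Pser_half j (m/2)
  rw [Finset.sum_congr rfl fun m _ => hP m, comb (bT j) (summable_bT hj) k]
  have hfin : ∀ m : ℕ, (2*(m:ℝ)+1) * bT j m = 1 / (2 * (m : ℝ) + 1) ^ (j - 1) := by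
    intro m
    rw [bT, mul_one_div]
    have hjj : j = (j-1) + 1 := by omega
    rw [hjj, pow_succ]
    have hpos : (0:ℝ) < 2*(m:ℝ)+1 := by positivity
    rw [show j - 1 + 1 - 1 = j - 1 from by omega]
    field_simp
  have htail : ∑' i : ℕ, bT j (i + (k+1)) = ∑' m : ℕ, 1 / (2 * ((m : ℝ) + k + 1) + 1) ^ j := by
    refine tsum_congr fun i => ?_
    rw [bT]
    push_cast
    ring_nf
  rw [Finset.sum_congr rfl fun m _ => hfin m, htail]
  ring
end
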